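/- arXiv:1609.00936 — 3 statements merged into one kernel-verified Lean document; each statement's English description precedes it below -/
import Mathlib

section
/- Let 1 < p ≤ 2 and E(f) = ‖f‖_p² on X = L^p(Ω,μ), with pairing ⟨f,g⟩ = 2Re∫f*g dμ. Then for all f₁, f₂ ∈ X: E(f₂) ≥ E(f₁) + ⟨f₂-f₁, ∇E(f₁)⟩ + (p-1)‖f₂-f₁‖_p², i.e., the squared L^p norm is (p-1)-convex. -/
open MeasureTheory

noncomputable section

/-- The `L^p` norm (with real exponent `p`) of `f`. -/
def np {Ω : Type*} [MeasurableSpace Ω] (μ : Measure Ω) (p : ℝ) (f : Ω → ℂ) : ℝ :=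
  (eLpNorm f (ENNReal.ofReal p) μ).toReal

/-- The real pairing `⟨f,g⟩ = 2 Re ∫ f* g dμ`. -/
def pairL {Ω : Type*} [MeasurableSpace Ω] (μ : Measure Ω) (f g : Ω → ℂ) : ℝ :=
  2 * (∫ x, (starRingEnd ℂ) (f x) * g x ∂μ).re

/-- The gradient `∇E(f) = ‖f‖_p^{2-p} |f|^{p-1} sgn f = ‖f‖_p^{2-p} |f|^{p-2} f`
of `E(f) = ‖f‖_p²`. -/
def gradE {Ω : Type*} [MeasurableSpace Ω] (μ : Measure Ω) (p : ℝ) (f : Ω → ℂ) : Ω → ℂ :=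
  fun x => ((np μ p f ^ (2 - p) * ‖f x‖ ^ (p - 2) : ℝ)) • f x

namespace Stmt11

open Real
open scoped ENNReal NNReal

section Part1

lemma ofReal_norm_eq_coe_nnnorm {E : Type*} [NormedAddCommGroup E] (a : E) :
    ENNReal.ofReal ‖a‖ = (‖a‖₊ : ℝ≥0∞) := ofReal_norm a


/-- Two-term Hölder inequality. -/
lemma holder2 {θ : ℝ} (hθ : 0 < θ) (hθ1 : θ < 1) {x1 x2 y1 y2 : ℝ}
    (hx1 : 0 ≤ x1) (hx2 : 0 ≤ x2) (hy1 : 0 ≤ y1) (hy2 : 0 ≤ y2) :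
    x1 ^ θ * y1 ^ (1 - θ) + x2 ^ θ * y2 ^ (1 - θ) ≤ (x1 + x2) ^ θ * (y1 + y2) ^ (1 - θ) := by
  rcases eq_or_lt_of_le (by linarith : (0:ℝ) ≤ x1 + x2) with hX | hX
  · have h1 : x1 = 0 := by linarith
    have h2 : x2 = 0 := by linarith
    simp [h1, h2, Real.zero_rpow hθ.ne']
  rcases eq_or_lt_of_le (by linarith : (0:ℝ) ≤ y1 + y2) with hY | hY
  · have h1 : y1 = 0 := by linarith
    have h2 : y2 = 0 := by linarith
    have h1θ : (1:ℝ) - θ ≠ 0 := by linarith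
    simp [h1, h2, Real.zero_rpow h1θ]
  set X := x1 + x2 with hXdef
  set Y := y1 + y2 with hYdef
  have hXp : (0:ℝ) < X ^ θ := Real.rpow_pos_of_pos hX θ
  have hYp : (0:ℝ) < Y ^ (1 - θ) := Real.rpow_pos_of_pos hY (1 - θ)
  have key : ∀ x y : ℝ, 0 ≤ x → 0 ≤ y →
      x ^ θ * y ^ (1 - θ) ≤ X ^ θ * Y ^ (1 - θ) * (θ * (x / X) + (1 - θ) * (y / Y)) := by
    intro x y hx hy
    have h := Real.geom_mean_le_arith_mean2_weighted hθ.le (by linarith : (0:ℝ) ≤ 1 - θ)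
      (div_nonneg hx hX.le) (div_nonneg hy hY.le) (by ring)
    calc x ^ θ * y ^ (1 - θ)
        = X ^ θ * Y ^ (1 - θ) * ((x / X) ^ θ * (y / Y) ^ (1 - θ)) := by
          rw [Real.div_rpow hx hX.le, Real.div_rpow hy hY.le]
          field_simp
      _ ≤ X ^ θ * Y ^ (1 - θ) * (θ * (x / X) + (1 - θ) * (y / Y)) := by
          apply mul_le_mul_of_nonneg_left h (by positivity)
  have k1 := key x1 y1 hx1 hy1
  have k2 := key x2 y2 hx2 hy2
  have hsum : θ * (x1 / X) + (1 - θ) * (y1 / Y) + (θ * (x2 / X) + (1 - θ) * (y2 / Y)) = 1 := by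
    field_simp
    ring
  calc x1 ^ θ * y1 ^ (1 - θ) + x2 ^ θ * y2 ^ (1 - θ)
      ≤ X ^ θ * Y ^ (1 - θ) * (θ * (x1 / X) + (1 - θ) * (y1 / Y))
        + X ^ θ * Y ^ (1 - θ) * (θ * (x2 / X) + (1 - θ) * (y2 / Y)) := add_le_add k1 k2
    _ = X ^ θ * Y ^ (1 - θ) := by rw [← mul_add, hsum, mul_one]

variable {p : ℝ}

/-- The reverse-Hölder key inequality. -/
lemma keyW (hp : 1 < p) (hp2 : p ≤ 2) {r : ℝ} (h0 : 0 ≤ r) (h1 : r < 1) :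
    1 ≤ (((1+r) ^ p + (1-r) ^ p) / 2) ^ ((2-p)/p) * (((1+r) ^ (p-2) + (1-r) ^ (p-2)) / 2) := by
  have hppos : (0:ℝ) < p := by linarith
  rcases eq_or_lt_of_le hp2 with hp2' | hp2'
  · subst hp2'
    norm_num
  have ha : (0:ℝ) < 1 + r := by linarith
  have hb : (0:ℝ) < 1 - r := by linarith
  set A := (1+r) ^ (p-2) + (1-r) ^ (p-2) with hA
  set B := (1+r) ^ p + (1-r) ^ p with hB
  have hApos : 0 < A := by positivity
  have hBpos : 0 < B := by positivity
  have e1 : ∀ x : ℝ, 0 < x → (x ^ (p-2)) ^ (p/2) * (x ^ p) ^ (1 - p/2) = 1 := by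
    intro x hx
    rw [← Real.rpow_mul hx.le, ← Real.rpow_mul hx.le, ← Real.rpow_add hx,
      show (p-2)*(p/2) + p*(1-p/2) = 0 by ring, Real.rpow_zero]
  have hθ : (0:ℝ) < p/2 := by linarith
  have hθ1 : p/2 < 1 := by linarith
  have h2 := holder2 hθ hθ1 (x1 := (1+r)^(p-2)) (x2 := (1-r)^(p-2)) (y1 := (1+r)^p)
    (y2 := (1-r)^p) (by positivity) (by positivity) (by positivity) (by positivity)
  rw [e1 _ ha, e1 _ hb] at h2
  -- h2 : 2 ≤ A ^ (p/2) * B ^ (1 - p/2)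
  have h3 : (2:ℝ) ≤ A ^ (p/2) * B ^ (1-p/2) := by linarith
  -- raise to power 2/p
  have h4 : (2:ℝ) ^ (2/p) ≤ A * B ^ ((2-p)/p) := by
    have := Real.rpow_le_rpow (by norm_num) h3 (by positivity : (0:ℝ) ≤ 2/p)
    rwa [Real.mul_rpow (by positivity) (by positivity), ← Real.rpow_mul hApos.le,
      ← Real.rpow_mul hBpos.le, show (p/2)*(2/p) = 1 by field_simp,
      show (1-p/2)*(2/p) = (2-p)/p by field_simp, Real.rpow_one] at this
  have hexp : (B/2) ^ ((2-p)/p) * (A/2) = (A * B ^ ((2-p)/p)) * (2:ℝ) ^ (-((2-p)/p) - 1) := by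
    rw [Real.div_rpow hBpos.le (by norm_num), Real.rpow_sub (by norm_num : (0:ℝ) < 2),
      Real.rpow_neg (by norm_num : (0:ℝ) ≤ 2), Real.rpow_one]
    field_simp
  rw [hexp]
  have h5 : (2:ℝ) ^ (2/p) * (2:ℝ) ^ (-((2-p)/p) - 1) = 1 := by
    rw [← Real.rpow_add (by norm_num : (0:ℝ) < 2), show 2/p + (-((2-p)/p) - 1) = 0 by
      field_simp; ring, Real.rpow_zero]
  calc (1:ℝ) = (2:ℝ) ^ (2/p) * (2:ℝ) ^ (-((2-p)/p) - 1) := h5.symm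
    _ ≤ (A * B ^ ((2-p)/p)) * (2:ℝ) ^ (-((2-p)/p) - 1) := by
        apply mul_le_mul_of_nonneg_right h4 (by positivity)

/-- auxiliary functions -/
def Mf (p r : ℝ) : ℝ := ((1+r) ^ p + (1-r) ^ p) / 2
def uf (p r : ℝ) : ℝ := (1+r) ^ (p-1) - (1-r) ^ (p-1)
def Gf (p r : ℝ) : ℝ := (Mf p r) ^ ((2-p)/p) * uf p r
def Hf (p r : ℝ) : ℝ := (Mf p r) ^ (2/p) - (p-1) * r^2
def Phif (p r : ℝ) : ℝ := Gf p r - 2*(p-1)*r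
def Gd (p r : ℝ) : ℝ :=
  (p/2 * uf p r) * ((2-p)/p) * (Mf p r) ^ ((2-p)/p - 1) * uf p r
    + (Mf p r) ^ ((2-p)/p) * ((p-1) * ((1+r) ^ (p-2) + (1-r) ^ (p-2)))

lemma Mf_pos (hp : 0 < p) {r : ℝ} (h0 : 0 ≤ r) (h1 : r ≤ 1) : 0 < Mf p r := by
  unfold Mf
  have ha : (0:ℝ) < 1 + r := by linarith
  have : (0:ℝ) < (1+r) ^ p := Real.rpow_pos_of_pos ha p
  have hb : (0:ℝ) ≤ (1-r) ^ p := Real.rpow_nonneg (by linarith) p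
  linarith

lemma uf_nonneg (hp : 1 ≤ p) {r : ℝ} (h0 : 0 ≤ r) (h1 : r ≤ 1) : 0 ≤ uf p r := by
  unfold uf
  have := Real.rpow_le_rpow (by linarith : (0:ℝ) ≤ 1 - r) (by linarith : 1 - r ≤ 1 + r)
    (by linarith : 0 ≤ p - 1)
  linarith

lemma hasDerivAt_Mf (hp : 1 < p) {r : ℝ} (hr : -1 < r) (hr1 : r < 1) :
    HasDerivAt (Mf p) (p/2 * uf p r) r := by
  have h1 : HasDerivAt (fun x : ℝ => (1+x) ^ p) (1 * p * (1+r) ^ (p-1)) r :=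
    (HasDerivAt.const_add 1 (hasDerivAt_id r)).rpow_const
      (Or.inl (by intro h; simp only [id_eq] at h; linarith))
  have h2 : HasDerivAt (fun x : ℝ => (1-x) ^ p) (-1 * p * (1-r) ^ (p-1)) r :=
    (HasDerivAt.const_sub 1 (hasDerivAt_id r)).rpow_const
      (Or.inl (by intro h; simp only [id_eq] at h; linarith))
  have := (h1.add h2).div_const 2
  refine this.congr_deriv ?_
  unfold uf; ring

lemma hasDerivAt_uf (hp : 1 < p) {r : ℝ} (hr : -1 < r) (hr1 : r < 1) :
    HasDerivAt (uf p) ((p-1) * ((1+r) ^ (p-2) + (1-r) ^ (p-2))) r := by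
  have h1 : HasDerivAt (fun x : ℝ => (1+x) ^ (p-1)) (1 * (p-1) * (1+r) ^ (p-1-1)) r :=
    (HasDerivAt.const_add 1 (hasDerivAt_id r)).rpow_const
      (Or.inl (by intro h; simp only [id_eq] at h; linarith))
  have h2 : HasDerivAt (fun x : ℝ => (1-x) ^ (p-1)) (-1 * (p-1) * (1-r) ^ (p-1-1)) r :=
    (HasDerivAt.const_sub 1 (hasDerivAt_id r)).rpow_const
      (Or.inl (by intro h; simp only [id_eq] at h; linarith))
  have := h1.sub h2
  refine this.congr_deriv ?_
  rw [show p - 1 - 1 = p - 2 by ring]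
  ring

lemma hasDerivAt_Gf (hp : 1 < p) {r : ℝ} (hr : 0 < r) (hr1 : r < 1) :
    HasDerivAt (Gf p) (Gd p r) r := by
  have hM := hasDerivAt_Mf hp (by linarith) hr1
  have hu := hasDerivAt_uf hp (by linarith) hr1
  have hMpos := Mf_pos (by linarith : (0:ℝ) < p) hr.le hr1.le
  have hMr : HasDerivAt (fun x => (Mf p x) ^ ((2-p)/p))
      ((p/2 * uf p r) * ((2-p)/p) * (Mf p r) ^ ((2-p)/p - 1)) r :=
    hM.rpow_const (Or.inl hMpos.ne')
  have := hMr.mul hu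
  exact this

lemma Gd_ge (hp : 1 < p) (hp2 : p ≤ 2) {r : ℝ} (hr : 0 < r) (hr1 : r < 1) :
    2*(p-1) ≤ Gd p r := by
  have hMpos := Mf_pos (by linarith : (0:ℝ) < p) hr.le hr1.le
  have hupos := uf_nonneg hp.le hr.le hr1.le
  have hterm1 : 0 ≤ (p/2 * uf p r) * ((2-p)/p) * (Mf p r) ^ ((2-p)/p - 1) * uf p r := by
    have hMr : (0:ℝ) ≤ (Mf p r) ^ ((2-p)/p - 1) := (Real.rpow_pos_of_pos hMpos _).le
    have h2p : (0:ℝ) ≤ (2-p)/p := div_nonneg (by linarith) (by linarith)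
    have hu2 : (0:ℝ) ≤ p/2 * uf p r := mul_nonneg (by linarith) hupos
    exact mul_nonneg (mul_nonneg (mul_nonneg hu2 h2p) hMr) hupos
  have hkey := keyW hp hp2 hr.le hr1
  have hterm2 : 2*(p-1) ≤ (Mf p r) ^ ((2-p)/p) * ((p-1) * ((1+r) ^ (p-2) + (1-r) ^ (p-2))) := by
    have h1 : (1:ℝ) ≤ (Mf p r) ^ ((2-p)/p) * (((1+r) ^ (p-2) + (1-r) ^ (p-2))/2) := hkey
    nlinarith [h1, (by linarith : (0:ℝ) < p - 1)]
  unfold Gd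
  linarith

lemma contOn_rpow_aux (c : ℝ) (q : ℝ) (hq : 0 ≤ q) (sgn : ℝ) :
    ContinuousOn (fun x : ℝ => (c + sgn * x) ^ q) (Set.Icc 0 1) :=
  ((continuous_const.add (continuous_const.mul continuous_id)).continuousOn).rpow_const
    (fun _ _ => Or.inr hq)

lemma contOn_Mf (hp : 1 < p) : ContinuousOn (Mf p) (Set.Icc 0 1) := by
  have h1 := contOn_rpow_aux 1 p (by linarith) 1
  have h2 := contOn_rpow_aux 1 p (by linarith) (-1)
  simp only [one_mul, neg_one_mul] at h1 h2
  unfold Mf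
  apply ContinuousOn.div_const
  apply ContinuousOn.add
  · convert h1 using 2 with x
  · convert h2 using 2 with x; rw [sub_eq_add_neg]

lemma contOn_uf (hp : 1 < p) : ContinuousOn (uf p) (Set.Icc 0 1) := by
  have h1 := contOn_rpow_aux 1 (p-1) (by linarith) 1
  have h2 := contOn_rpow_aux 1 (p-1) (by linarith) (-1)
  simp only [one_mul, neg_one_mul] at h1 h2
  unfold uf
  apply ContinuousOn.sub
  · convert h1 using 2 with x
  · convert h2 using 2 with x; rw [sub_eq_add_neg]

lemma contOn_Phif (hp : 1 < p) (hp2 : p ≤ 2) : ContinuousOn (Phif p) (Set.Icc 0 1) := by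
  unfold Phif Gf
  apply ContinuousOn.sub
  · exact ((contOn_Mf hp).rpow_const
      (fun _ _ => Or.inr (div_nonneg (by linarith) (by linarith)))).mul (contOn_uf hp)
  · exact (continuous_const.mul continuous_id).continuousOn

lemma Phif_nonneg (hp : 1 < p) (hp2 : p ≤ 2) {r : ℝ} (h0 : 0 ≤ r) (h1 : r ≤ 1) :
    0 ≤ Phif p r := by
  have hmono : MonotoneOn (Phif p) (Set.Icc 0 1) := by
    apply monotoneOn_of_deriv_nonneg (convex_Icc 0 1) (contOn_Phif hp hp2)
    · intro x hx
      rw [interior_Icc] at hx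
      have h := ((hasDerivAt_Gf hp hx.1 hx.2).sub
        ((hasDerivAt_id x).const_mul (2*(p-1)))).differentiableAt
      exact h.differentiableWithinAt
    · intro x hx
      rw [interior_Icc] at hx
      have h := (hasDerivAt_Gf hp hx.1 hx.2).sub ((hasDerivAt_id x).const_mul (2*(p-1)))
      have hd : deriv (Phif p) x = Gd p x - 2*(p-1)*1 := by
        have : Phif p = fun r => Gf p r - 2*(p-1)*r := rfl
        rw [this]
        exact HasDerivAt.deriv h
      rw [hd]
      have := Gd_ge hp hp2 hx.1 hx.2
      linarith
  have h00 : Phif p 0 = 0 := by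
    unfold Phif Gf uf
    norm_num
  have := hmono (Set.mem_Icc.mpr ⟨le_refl 0, by norm_num⟩) (Set.mem_Icc.mpr ⟨h0, h1⟩) h0
  rw [h00] at this
  exact this

lemma contOn_Hf (hp : 1 < p) : ContinuousOn (Hf p) (Set.Icc 0 1) := by
  unfold Hf
  apply ContinuousOn.sub
  · exact (contOn_Mf hp).rpow_const (fun _ _ => Or.inr (by positivity))
  · exact (continuous_const.mul (continuous_pow 2)).continuousOn

lemma Hf_ge_one (hp : 1 < p) (hp2 : p ≤ 2) {r : ℝ} (h0 : 0 ≤ r) (h1 : r ≤ 1) :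
    1 ≤ Hf p r := by
  have hppos : (0:ℝ) < p := by linarith
  have hmono : MonotoneOn (Hf p) (Set.Icc 0 1) := by
    apply monotoneOn_of_deriv_nonneg (convex_Icc 0 1) (contOn_Hf hp)
    · intro x hx
      rw [interior_Icc] at hx
      have hM := hasDerivAt_Mf hp (by linarith [hx.1]) hx.2
      have hMpos := Mf_pos hppos hx.1.le hx.2.le
      have h : HasDerivAt (fun y => (Mf p y) ^ (2/p) - (p-1) * y^2)
          ((p/2 * uf p x) * (2/p) * (Mf p x) ^ (2/p - 1) - (p-1) * (↑2 * x ^ (2-1))) x :=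
        (hM.rpow_const (Or.inl hMpos.ne')).sub ((hasDerivAt_pow 2 x).const_mul (p-1))
      exact h.differentiableAt.differentiableWithinAt
    · intro x hx
      rw [interior_Icc] at hx
      have hM := hasDerivAt_Mf hp (by linarith [hx.1]) hx.2
      have hMpos := Mf_pos hppos hx.1.le hx.2.le
      have h : HasDerivAt (fun y => (Mf p y) ^ (2/p) - (p-1) * y^2)
          ((p/2 * uf p x) * (2/p) * (Mf p x) ^ (2/p - 1) - (p-1) * (↑2 * x ^ (2-1))) x :=
        (hM.rpow_const (Or.inl hMpos.ne')).sub ((hasDerivAt_pow 2 x).const_mul (p-1))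
      have hd : deriv (Hf p) x =
          (p/2 * uf p x) * (2/p) * (Mf p x) ^ (2/p - 1) - (p-1) * (↑2 * x ^ (2-1)) := by
        have hHf : Hf p = fun y => (Mf p y) ^ (2/p) - (p-1) * y^2 := rfl
        rw [hHf]
        exact HasDerivAt.deriv h
      rw [hd]
      have hPhi := Phif_nonneg hp hp2 hx.1.le hx.2.le
      unfold Phif Gf at hPhi
      have hexp : (Mf p x) ^ (2/p - 1) = (Mf p x) ^ ((2-p)/p) := by
        rw [show 2/p - 1 = (2-p)/p by field_simp]
      rw [hexp]
      have : (p/2 * uf p x) * (2/p) * (Mf p x) ^ ((2-p)/p)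
          = (Mf p x) ^ ((2-p)/p) * uf p x := by
        field_simp
      rw [this]
      norm_num
      linarith
  have h00 : Hf p 0 = 1 := by
    unfold Hf Mf
    norm_num
  have := hmono (Set.mem_Icc.mpr ⟨le_refl 0, by norm_num⟩) (Set.mem_Icc.mpr ⟨h0, h1⟩) h0
  rw [h00] at this
  exact this

/-- The scalar core inequality. -/
lemma core (hp : 1 < p) (hp2 : p ≤ 2) {r : ℝ} (h0 : 0 ≤ r) (h1 : r ≤ 1) :
    2 * (1 + (p-1)*r^2) ^ (p/2) ≤ (1+r) ^ p + (1-r) ^ p := by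
  have hppos : (0:ℝ) < p := by linarith
  have hH := Hf_ge_one hp hp2 h0 h1
  unfold Hf at hH
  have hMpos := Mf_pos hppos h0 h1
  have h2 : 1 + (p-1)*r^2 ≤ (Mf p r) ^ (2/p) := by linarith
  have h3 : (1 + (p-1)*r^2) ^ (p/2) ≤ ((Mf p r) ^ (2/p)) ^ (p/2) :=
    Real.rpow_le_rpow (by nlinarith [sq_nonneg r]) h2 (by positivity)
  rw [← Real.rpow_mul hMpos.le, show (2/p)*(p/2) = 1 by field_simp, Real.rpow_one] at h3
  unfold Mf at h3
  linarith

/-- scaled scalar two-point inequality -/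
lemma scalar (hp : 1 < p) (hp2 : p ≤ 2) {s t : ℝ} (ht : 0 ≤ t) (hts : t ≤ s) :
    2 * (s^2 + (p-1) * t^2) ^ (p/2) ≤ (s+t) ^ p + (s-t) ^ p := by
  have hppos : (0:ℝ) < p := by linarith
  rcases eq_or_lt_of_le (le_trans ht hts) with hs | hs
  · have ht0 : t = 0 := by linarith
    rw [← hs, ht0]
    norm_num
    rw [Real.zero_rpow (by positivity : p/2 ≠ 0), Real.zero_rpow hppos.ne']
    norm_num
  set r := t / s with hr
  have hr0 : 0 ≤ r := div_nonneg ht hs.le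
  have hr1 : r ≤ 1 := div_le_one_of_le₀ hts hs.le
  have hco := core hp hp2 hr0 hr1
  have hsp : (0:ℝ) < s ^ p := Real.rpow_pos_of_pos hs p
  have e1 : (s+t) ^ p = s ^ p * (1+r) ^ p := by
    rw [← Real.mul_rpow hs.le (by linarith : (0:ℝ) ≤ 1 + r)]
    congr 1
    rw [hr]
    field_simp
  have e2 : (s-t) ^ p = s ^ p * (1-r) ^ p := by
    rw [← Real.mul_rpow hs.le (by linarith : (0:ℝ) ≤ 1 - r)]
    congr 1
    rw [hr]
    field_simp
  have e3 : (s^2 + (p-1) * t^2) ^ (p/2) = s ^ p * (1 + (p-1)*r^2) ^ (p/2) := by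
    have : s^2 + (p-1) * t^2 = s^2 * (1 + (p-1)*r^2) := by
      rw [hr]
      field_simp
    rw [this, Real.mul_rpow (by positivity) (by nlinarith [sq_nonneg r]),
      ← Real.rpow_natCast s 2, ← Real.rpow_mul hs.le,
      show ((2:ℕ):ℝ) * (p/2) = p by push_cast; ring]
  rw [e1, e2, e3]
  calc 2 * (s ^ p * (1 + (p-1)*r^2) ^ (p/2)) = s ^ p * (2 * (1 + (p-1)*r^2) ^ (p/2)) := by ring
    _ ≤ s ^ p * ((1+r) ^ p + (1-r) ^ p) := by
        exact mul_le_mul_of_nonneg_left hco hsp.le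
    _ = s ^ p * (1+r) ^ p + s ^ p * (1-r) ^ p := by ring

/-- concave pairs lemma for rpow -/
lemma concave_pairs {q : ℝ} (hq : 0 < q) (hq1 : q ≤ 1) {a b c : ℝ} (h0 : 0 ≤ a)
    (hac : a ≤ c) (hcb : c ≤ b) :
    a ^ q + b ^ q ≤ c ^ q + (a + b - c) ^ q := by
  rcases eq_or_lt_of_le hq1 with hq1' | hq1'
  · subst hq1'
    rw [Real.rpow_one, Real.rpow_one, Real.rpow_one, Real.rpow_one]
    linarith
  rcases eq_or_lt_of_le (le_trans hac hcb) with hab | hab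
  · have hca : c = a := le_antisymm (hab ▸ hcb) hac
    rw [hca]
    have : a + b - a = b := by ring
    rw [this]
  set l := (b - c) / (b - a) with hl
  have hba : 0 < b - a := by linarith
  have hl0 : 0 ≤ l := div_nonneg (by linarith) hba.le
  have hl1 : l ≤ 1 := by
    rw [hl, div_le_one hba]
    linarith
  have hcon := (Real.strictConcaveOn_rpow hq hq1').concaveOn
  have hmema : a ∈ Set.Ici (0:ℝ) := h0
  have hmemb : b ∈ Set.Ici (0:ℝ) := by simp only [Set.mem_Ici]; linarith
  have h1 := hcon.2 hmema hmemb hl0 (by linarith : 0 ≤ 1 - l) (by ring)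
  have h2 := hcon.2 hmema hmemb (by linarith : 0 ≤ 1 - l) hl0 (by ring)
  simp only [smul_eq_mul] at h1 h2
  have ec : l * a + (1-l) * b = c := by
    rw [hl]
    field_simp
    ring
  have ed : (1-l) * a + l * b = a + b - c := by
    rw [hl]
    field_simp
    ring
  rw [ec] at h1
  rw [ed] at h2
  linarith

/-- complex two-point inequality, case |b| ≤ |a| -/
lemma twopoint_aux (hp : 1 < p) (hp2 : p ≤ 2) {a b : ℂ} (hba : ‖b‖ ≤ ‖a‖) :
    2 * ((‖a‖)^2 + (p-1) * (‖b‖)^2) ^ (p/2) ≤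
      ‖a+b‖ ^ p + ‖a-b‖ ^ p := by
  set A := ‖a‖ with hA
  set B := ‖b‖ with hB
  have hA0 : 0 ≤ A := norm_nonneg a
  have hB0 : 0 ≤ B := norm_nonneg b
  set c := (a * (starRingEnd ℂ) b).re with hc
  have habsc : |c| ≤ A * B := by
    calc |c| ≤ ‖a * (starRingEnd ℂ) b‖ := Complex.abs_re_le_norm _
      _ = A * B := by rw [norm_mul, Complex.norm_conj]
  have habs2 : ∀ z : ℂ, ‖z‖ ^ p = ((‖z‖)^2) ^ (p/2) := by
    intro z
    rw [← Real.rpow_natCast (‖z‖) 2, ← Real.rpow_mul (norm_nonneg z),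
      show ((2:ℕ):ℝ) * (p/2) = p by push_cast; ring]
  have hsq_add : (‖a+b‖)^2 = A^2 + B^2 + 2*c := by
    rw [Complex.sq_norm, Complex.normSq_add, hA, hB, Complex.sq_norm, Complex.sq_norm]
  have hsq_sub : (‖a-b‖)^2 = A^2 + B^2 - 2*c := by
    rw [Complex.sq_norm, Complex.normSq_sub, hA, hB, Complex.sq_norm, Complex.sq_norm]
  rw [habs2 (a+b), habs2 (a-b), hsq_add, hsq_sub]
  have hq : (0:ℝ) < p/2 := by linarith
  have hq1 : p/2 ≤ 1 := by linarith
  have hpair : ((A-B)^2) ^ (p/2) + ((A+B)^2) ^ (p/2) ≤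
      (A^2 + B^2 + 2*c) ^ (p/2) + (A^2 + B^2 - 2*c) ^ (p/2) := by
    have habs' : -(A*B) ≤ c ∧ c ≤ A*B := abs_le.mp habsc
    have h1 : (A-B)^2 ≤ A^2 + B^2 + 2*c := by nlinarith [habs'.1]
    have h2 : A^2 + B^2 + 2*c ≤ (A+B)^2 := by nlinarith [habs'.2]
    have h0' : (0:ℝ) ≤ (A-B)^2 := sq_nonneg _
    have := concave_pairs hq hq1 h0' h1 h2
    have e : (A-B)^2 + (A+B)^2 - (A^2+B^2+2*c) = A^2 + B^2 - 2*c := by ring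
    rw [e] at this
    linarith
  have hAB : ((A+B)^2) ^ (p/2) = (A+B) ^ p := by
    rw [← Real.rpow_natCast (A+B) 2, ← Real.rpow_mul (by linarith),
      show ((2:ℕ):ℝ) * (p/2) = p by push_cast; ring]
  have hAB' : ((A-B)^2) ^ (p/2) = (A-B) ^ p := by
    rw [← Real.rpow_natCast (A-B) 2, ← Real.rpow_mul (by linarith),
      show ((2:ℕ):ℝ) * (p/2) = p by push_cast; ring]
  have hscal := scalar hp hp2 hB0 hba
  rw [hAB, hAB'] at hpair
  linarith

/-- complex two-point inequality -/
lemma twopoint (hp : 1 < p) (hp2 : p ≤ 2) (a b : ℂ) :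
    2 * ((‖a‖)^2 + (p-1) * (‖b‖)^2) ^ (p/2) ≤
      ‖a+b‖ ^ p + ‖a-b‖ ^ p := by
  rcases le_total (‖b‖) (‖a‖) with h | h
  · exact twopoint_aux hp hp2 h
  · have := twopoint_aux hp hp2 (a := b) (b := a) h
    rw [show b + a = a + b by ring, norm_sub_rev b a] at this
    refine le_trans ?_ this
    have hBA : 0 ≤ (‖b‖ - ‖a‖) * (‖b‖ + ‖a‖) :=
      mul_nonneg (by linarith) (by positivity)
    have h2p : 0 ≤ (2 - p) * ((‖b‖ - ‖a‖) * (‖b‖ + ‖a‖)) :=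
      mul_nonneg (by linarith) hBA
    have hmono : (‖a‖)^2 + (p-1) * (‖b‖)^2 ≤
        (‖b‖)^2 + (p-1) * (‖a‖)^2 := by nlinarith [h2p]
    have h0' : (0:ℝ) ≤ (‖a‖)^2 + (p-1) * (‖b‖)^2 := by
      nlinarith [sq_nonneg (‖a‖), sq_nonneg (‖b‖)]
    have := Real.rpow_le_rpow h0' hmono (by positivity : (0:ℝ) ≤ p/2)
    linarith


end Part1

section Part2


variable {Ω : Type*} [MeasurableSpace Ω] {μ : Measure Ω}

lemma rev_minkowski {F G : Ω → ℝ≥0∞} (hF : AEMeasurable F μ) (hG : AEMeasurable G μ)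
    (hFfin : ∀ᵐ x ∂μ, F x ≠ ⊤) (hGfin : ∀ᵐ x ∂μ, G x ≠ ⊤)
    {q : ℝ} (hq : 0 < q) (hq1 : q ≤ 1) :
    (∫⁻ x, (F x) ^ q ∂μ) ^ (1/q) + (∫⁻ x, (G x) ^ q ∂μ) ^ (1/q) ≤
      (∫⁻ x, (F x + G x) ^ q ∂μ) ^ (1/q) := by
  rcases eq_or_lt_of_le hq1 with hq1' | hq1'
  · subst hq1'
    simp only [ENNReal.rpow_one, one_div_one]
    rw [lintegral_add_left' hF]
  set V := fun x => F x + G x with hV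
  have hVmeas : AEMeasurable V μ := hF.add hG
  set T := ∫⁻ x, (V x) ^ q ∂μ with hT
  by_cases hTtop : T = ⊤
  · rw [hTtop, ENNReal.top_rpow_of_pos (by positivity)]
    exact le_top
  by_cases hT0 : T = 0
  · have hae : ∀ᵐ x ∂μ, (V x) ^ q = 0 :=
      (lintegral_eq_zero_iff' (hVmeas.pow_const q)).mp hT0
    have hF0 : ∀ᵐ x ∂μ, (F x) ^ q = 0 := by
      filter_upwards [hae] with x hx
      rw [ENNReal.rpow_eq_zero_iff] at hx
      rcases hx with ⟨h1, _⟩ | ⟨_, h2⟩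
      · have : F x = 0 := by
          have := add_eq_zero.mp h1
          exact this.1
        rw [this, ENNReal.zero_rpow_of_pos hq]
      · linarith
    have hG0 : ∀ᵐ x ∂μ, (G x) ^ q = 0 := by
      filter_upwards [hae] with x hx
      rw [ENNReal.rpow_eq_zero_iff] at hx
      rcases hx with ⟨h1, _⟩ | ⟨_, h2⟩
      · have : G x = 0 := (add_eq_zero.mp h1).2
        rw [this, ENNReal.zero_rpow_of_pos hq]
      · linarith
    rw [lintegral_congr_ae hF0, lintegral_congr_ae hG0, lintegral_zero,
      ENNReal.zero_rpow_of_pos (by positivity)]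
    simp
  -- main case
  have hVfin : ∀ᵐ x ∂μ, V x ≠ ⊤ := by
    filter_upwards [hFfin, hGfin] with x h1 h2
    simp [hV, ENNReal.add_ne_top, h1, h2]
  have hconj : (1/q).HolderConjugate (1/(1-q)) := by
    rw [Real.holderConjugate_iff]; constructor
    · rw [lt_div_iff₀ hq]; linarith
    · rw [one_div, one_div, inv_inv, inv_inv]; ring
  have inner : ∀ A : Ω → ℝ≥0∞, AEMeasurable A μ → (∀ x, A x ≤ V x) →
      (∫⁻ x, (A x) ^ q ∂μ) ^ (1/q) ≤
        (∫⁻ x, A x * (V x) ^ (q-1) ∂μ) * T ^ ((1-q)/q) := by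
    intro A hA hle
    have hptwise : ∀ᵐ x ∂μ, (A x) ^ q =
        (A x * (V x) ^ (q-1)) ^ q * ((V x) ^ q) ^ (1-q) := by
      filter_upwards [hVfin] with x hVx
      by_cases hV0 : V x = 0
      · have hA0 : A x = 0 := le_antisymm (hV0 ▸ hle x) (zero_le)
        rw [hA0, hV0]
        simp [ENNReal.zero_rpow_of_pos hq]
      · rw [ENNReal.mul_rpow_of_nonneg _ _ hq.le, ← ENNReal.rpow_mul, ← ENNReal.rpow_mul]
        rw [mul_assoc, ← ENNReal.rpow_add _ _ hV0 hVx,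
          show (q-1)*q + q*(1-q) = 0 by ring, ENNReal.rpow_zero, mul_one]
    have hstep : (∫⁻ x, (A x) ^ q ∂μ) ≤
        (∫⁻ x, A x * (V x) ^ (q-1) ∂μ) ^ q * T ^ (1-q) := by
      rw [lintegral_congr_ae hptwise]
      have hH := ENNReal.lintegral_mul_le_Lp_mul_Lq μ hconj
        ((hA.mul (hVmeas.pow_const (q-1))).pow_const q)
        ((hVmeas.pow_const q).pow_const (1-q))
      simp only [Pi.mul_apply] at hH
      calc ∫⁻ x, (A x * (V x) ^ (q-1)) ^ q * ((V x) ^ q) ^ (1-q) ∂μ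
          ≤ (∫⁻ x, ((A x * (V x) ^ (q-1)) ^ q) ^ (1/q) ∂μ) ^ (1/(1/q)) *
            (∫⁻ x, (((V x) ^ q) ^ (1-q)) ^ (1/(1-q)) ∂μ) ^ (1/(1/(1-q))) := hH
        _ = (∫⁻ x, A x * (V x) ^ (q-1) ∂μ) ^ q * T ^ (1-q) := by
            rw [one_div_one_div, one_div_one_div]
            congr 1
            · congr 1
              apply lintegral_congr
              intro x
              rw [← ENNReal.rpow_mul, mul_one_div_cancel hq.ne', ENNReal.rpow_one]
            · congr 1
              apply lintegral_congr
              intro x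
              rw [← ENNReal.rpow_mul, mul_one_div_cancel (by linarith : 1 - q ≠ 0),
                ENNReal.rpow_one]
    calc (∫⁻ x, (A x) ^ q ∂μ) ^ (1/q)
        ≤ ((∫⁻ x, A x * (V x) ^ (q-1) ∂μ) ^ q * T ^ (1-q)) ^ (1/q) :=
          ENNReal.rpow_le_rpow hstep (by positivity)
      _ = (∫⁻ x, A x * (V x) ^ (q-1) ∂μ) * T ^ ((1-q)/q) := by
          rw [ENNReal.mul_rpow_of_nonneg _ _ (by positivity : (0:ℝ) ≤ 1/q),
            ← ENNReal.rpow_mul, ← ENNReal.rpow_mul, mul_one_div_cancel hq.ne',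
            ENNReal.rpow_one, mul_one_div]
  have hFle : ∀ x, F x ≤ V x := fun x => le_add_right (le_refl (F x))
  have hGle : ∀ x, G x ≤ V x := fun x => le_add_left (le_refl (G x))
  have hiF := inner F hF hFle
  have hiG := inner G hG hGle
  have hsum : (∫⁻ x, F x * (V x) ^ (q-1) ∂μ) + (∫⁻ x, G x * (V x) ^ (q-1) ∂μ)
      = ∫⁻ x, V x * (V x) ^ (q-1) ∂μ := by
    rw [← lintegral_add_left' (f := fun x => F x * V x ^ (q-1)) (hF.mul (hVmeas.pow_const (q-1)))]
    apply lintegral_congr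
    intro x
    simp [hV]
    ring
  have hVq : ∫⁻ x, V x * (V x) ^ (q-1) ∂μ = T := by
    rw [hT]
    apply lintegral_congr_ae
    filter_upwards [hVfin] with x hVx
    by_cases hV0 : V x = 0
    · rw [hV0, zero_mul, ENNReal.zero_rpow_of_pos hq]
    · nth_rewrite 1 [← ENNReal.rpow_one (V x)]
      rw [← ENNReal.rpow_add _ _ hV0 hVx, show (1:ℝ) + (q-1) = q by ring]
  calc (∫⁻ x, (F x) ^ q ∂μ) ^ (1/q) + (∫⁻ x, (G x) ^ q ∂μ) ^ (1/q)
      ≤ (∫⁻ x, F x * (V x) ^ (q-1) ∂μ) * T ^ ((1-q)/q)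
        + (∫⁻ x, G x * (V x) ^ (q-1) ∂μ) * T ^ ((1-q)/q) := add_le_add hiF hiG
    _ = ((∫⁻ x, F x * (V x) ^ (q-1) ∂μ) + (∫⁻ x, G x * (V x) ^ (q-1) ∂μ)) * T ^ ((1-q)/q) := by
        rw [add_mul]
    _ = T * T ^ ((1-q)/q) := by rw [hsum, hVq]
    _ = T ^ (1/q) := by
        nth_rewrite 1 [← ENNReal.rpow_one T]
        rw [← ENNReal.rpow_add _ _ hT0 hTtop]
        congr 1
        field_simp
        ring


end Part2

section Part3


variable {Ω : Type*} [MeasurableSpace Ω] {μ : Measure Ω} {p : ℝ}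

/-- the p-th power lintegral -/
def Jf {Ω : Type*} [MeasurableSpace Ω] (μ : Measure Ω) (p : ℝ) (f : Ω → ℂ) : ℝ≥0∞ :=
  ∫⁻ x, (‖f x‖₊ : ℝ≥0∞) ^ p ∂μ

lemma np_eq (hp : 1 < p) (f : Ω → ℂ) : np μ p f = ((Jf μ p f) ^ (1/p)).toReal := by
  unfold np Jf
  rw [eLpNorm_eq_lintegral_rpow_enorm_toReal (by simp [ENNReal.ofReal_eq_zero]; linarith)
    ENNReal.ofReal_ne_top, ENNReal.toReal_ofReal (by linarith : (0:ℝ) ≤ p)]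
  rfl

lemma np_sq (hp : 1 < p) (f : Ω → ℂ) : np μ p f ^ 2 = ((Jf μ p f) ^ (2/p)).toReal := by
  rw [np_eq hp f, ← Real.rpow_natCast ((Jf μ p f ^ (1/p)).toReal) 2, ENNReal.toReal_rpow,
    ← ENNReal.rpow_mul]
  congr 2
  push_cast
  field_simp

lemma Jf_fin (hp : 1 < p) {f : Ω → ℂ} (hf : MemLp f (ENNReal.ofReal p) μ) : Jf μ p f ≠ ⊤ := by
  have h := hf.eLpNorm_lt_top
  rw [eLpNorm_eq_lintegral_rpow_enorm_toReal (by simp [ENNReal.ofReal_eq_zero]; linarith)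
    ENNReal.ofReal_ne_top, ENNReal.toReal_ofReal (by linarith : (0:ℝ) ≤ p)] at h
  intro htop
  rw [show (∫⁻ x, ‖f x‖ₑ ^ p ∂μ) = Jf μ p f from rfl, htop,
    ENNReal.top_rpow_of_pos (by positivity)] at h
  exact absurd h (by simp)

/-- integrated two-point inequality: 2-uniform convexity of L^p -/
lemma npBound (hp : 1 < p) (hp2 : p ≤ 2) {u v : Ω → ℂ}
    (hu : MemLp u (ENNReal.ofReal p) μ) (hv : MemLp v (ENNReal.ofReal p) μ) :
    2 * np μ p u ^ 2 + 2*(p-1) * np μ p v ^ 2 ≤ np μ p (u+v) ^ 2 + np μ p (u-v) ^ 2 := by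
  have hppos : (0:ℝ) < p := by linarith
  set F : Ω → ℝ≥0∞ := fun x => (‖u x‖₊ : ℝ≥0∞) ^ (2:ℝ) with hF
  set G : Ω → ℝ≥0∞ := fun x => ENNReal.ofReal (p-1) * (‖v x‖₊ : ℝ≥0∞) ^ (2:ℝ) with hG
  set q : ℝ := p/2 with hq
  have hq0 : 0 < q := by positivity
  have hq1 : q ≤ 1 := by rw [hq]; linarith
  have hmF : AEMeasurable F μ := (hu.aestronglyMeasurable.enorm).pow_const (2:ℝ)
  have hmG : AEMeasurable G μ :=
    ((hv.aestronglyMeasurable.enorm).pow_const (2:ℝ)).const_mul _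
  have hfinF : ∀ᵐ x ∂μ, F x ≠ ⊤ := .of_forall fun x => by
    simp only [hF]
    exact (ENNReal.rpow_lt_top_of_nonneg (by norm_num) ENNReal.coe_ne_top).ne
  have hfinG : ∀ᵐ x ∂μ, G x ≠ ⊤ := .of_forall fun x => by
    simp only [hG]
    exact (ENNReal.mul_lt_top ENNReal.ofReal_lt_top
      (ENNReal.rpow_lt_top_of_nonneg (by norm_num) ENNReal.coe_ne_top)).ne
  -- identify ∫ F^q and ∫ G^q
  have hFq : ∀ x, (F x) ^ q = (‖u x‖₊ : ℝ≥0∞) ^ p := by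
    intro x
    rw [hF, ← ENNReal.rpow_mul, show (2:ℝ) * q = p by rw [hq]; ring]
  have hGq : ∀ x, (G x) ^ q = (ENNReal.ofReal (p-1)) ^ q * (‖v x‖₊ : ℝ≥0∞) ^ p := by
    intro x
    rw [hG, ENNReal.mul_rpow_of_nonneg _ _ hq0.le, ← ENNReal.rpow_mul,
      show (2:ℝ) * q = p by rw [hq]; ring]
  have hJFq : ∫⁻ x, (F x) ^ q ∂μ = Jf μ p u := lintegral_congr fun x => hFq x
  have hJGq : ∫⁻ x, (G x) ^ q ∂μ = (ENNReal.ofReal (p-1)) ^ q * Jf μ p v := by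
    rw [show (∫⁻ x, (G x)^q ∂μ) = ∫⁻ x, (ENNReal.ofReal (p-1)) ^ q * (‖v x‖₊ : ℝ≥0∞) ^ p ∂μ
      from lintegral_congr fun x => hGq x]
    exact lintegral_const_mul' _ _
      (ENNReal.rpow_lt_top_of_nonneg hq0.le ENNReal.ofReal_ne_top).ne
  -- pointwise two-point inequality
  have hptw : ∀ x, 2 * (F x + G x) ^ q ≤
      (‖u x + v x‖₊ : ℝ≥0∞) ^ p + (‖u x - v x‖₊ : ℝ≥0∞) ^ p := by
    intro x
    have e1 : ∀ z : ℂ, (‖z‖₊ : ℝ≥0∞) = ENNReal.ofReal (‖z‖) := fun z => by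
      rw [← ofReal_norm_eq_coe_nnnorm]
    have e2 : ∀ z : ℂ, (‖z‖₊ : ℝ≥0∞) ^ (2:ℝ) = ENNReal.ofReal ((‖z‖)^2) := fun z => by
      rw [e1, ENNReal.ofReal_rpow_of_nonneg (norm_nonneg z) (by norm_num),
        ← Real.rpow_natCast (‖z‖) 2]
      norm_num
    have e3 : ∀ z : ℂ, (‖z‖₊ : ℝ≥0∞) ^ p = ENNReal.ofReal ((‖z‖)^p) := fun z => by
      rw [e1, ENNReal.ofReal_rpow_of_nonneg (norm_nonneg z) (by linarith)]
    have eFG : F x + G x = ENNReal.ofReal ((‖u x‖)^2 + (p-1)*(‖v x‖)^2) := by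
      show (‖u x‖₊ : ℝ≥0∞) ^ (2:ℝ) + ENNReal.ofReal (p-1) * (‖v x‖₊ : ℝ≥0∞) ^ (2:ℝ) = _
      rw [e2, e2, ← ENNReal.ofReal_mul (by linarith : (0:ℝ) ≤ p - 1),
        ← ENNReal.ofReal_add (sq_nonneg _) (mul_nonneg (by linarith) (sq_nonneg _))]
    have habase : (0:ℝ) ≤ (‖u x‖)^2 + (p-1)*(‖v x‖)^2 :=
      add_nonneg (sq_nonneg _) (mul_nonneg (by linarith) (sq_nonneg _))
    rw [eFG, ENNReal.ofReal_rpow_of_nonneg habase hq0.le, e3, e3,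
      ← ENNReal.ofReal_add (Real.rpow_nonneg (norm_nonneg _) p)
        (Real.rpow_nonneg (norm_nonneg _) p),
      show (2:ℝ≥0∞) = ENNReal.ofReal (2:ℝ) by simp,
      ← ENNReal.ofReal_mul (by norm_num)]
    apply ENNReal.ofReal_le_ofReal
    exact twopoint hp hp2 (u x) (v x)
  have hint : 2 * ∫⁻ x, (F x + G x) ^ q ∂μ ≤ Jf μ p (u+v) + Jf μ p (u-v) := by
    rw [← lintegral_const_mul' _ _ (by norm_num : (2:ℝ≥0∞) ≠ ⊤)]
    unfold Jf
    rw [← lintegral_add_left' (f := fun x => (‖(u+v) x‖₊ : ℝ≥0∞) ^ p) ((hu.aestronglyMeasurable.add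
      hv.aestronglyMeasurable).enorm.pow_const p)]
    apply lintegral_mono
    intro x
    exact hptw x
  -- reverse Minkowski
  have hrm := rev_minkowski hmF hmG hfinF hfinG hq0 hq1
  rw [hJFq, hJGq] at hrm
  have hpm : (ENNReal.ofReal (p-1)) ^ q * Jf μ p v = ((ENNReal.ofReal (p-1)) * (Jf μ p v) ^ (1/q) ) ^ q
      ∨ True := Or.inr trivial
  -- rewrite ((c^q * Jv)^(1/q)) = c * Jv^(1/q)
  have hGrm : ((ENNReal.ofReal (p-1)) ^ q * Jf μ p v) ^ (1/q) =
      ENNReal.ofReal (p-1) * (Jf μ p v) ^ (1/q) := by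
    rw [ENNReal.mul_rpow_of_nonneg _ _ (by positivity : (0:ℝ) ≤ 1/q), ← ENNReal.rpow_mul,
      mul_one_div_cancel hq0.ne', ENNReal.rpow_one]
  rw [hGrm] at hrm
  set S : ℝ≥0∞ := (Jf μ p u) ^ (1/q) + ENNReal.ofReal (p-1) * (Jf μ p v) ^ (1/q) with hS
  have hSle : S ^ q ≤ ∫⁻ x, (F x + G x) ^ q ∂μ := by
    have := ENNReal.rpow_le_rpow hrm hq0.le
    rwa [← ENNReal.rpow_mul, one_div_mul_cancel hq0.ne', ENNReal.rpow_one] at this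
  set a : ℝ≥0∞ := Jf μ p (u+v) with ha
  set b : ℝ≥0∞ := Jf μ p (u-v) with hb
  have hmain : 2 * S ^ q ≤ a + b := le_trans (mul_le_mul_right hSle 2) hint
  -- power mean step
  have hfa : a ≠ ⊤ := by rw [ha]; exact Jf_fin hp (hu.add hv)
  have hfb : b ≠ ⊤ := by rw [hb]; exact Jf_fin hp (hu.sub hv)
  have hfu : Jf μ p u ≠ ⊤ := Jf_fin hp hu
  have hfv : Jf μ p v ≠ ⊤ := Jf_fin hp hv
  have hS2 : S ≤ 2⁻¹ * a ^ (1/q) + 2⁻¹ * b ^ (1/q) := by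
    have h1 : S ^ q ≤ 2⁻¹ * a + 2⁻¹ * b := by
      have := mul_le_mul_right hmain (2⁻¹ : ℝ≥0∞)
      rwa [← mul_assoc, ENNReal.inv_mul_cancel (by norm_num) (by norm_num), one_mul,
        mul_add] at this
    have h3 := ENNReal.rpow_arith_mean_le_arith_mean2_rpow 2⁻¹ 2⁻¹ a b
      (by rw [← two_mul, ENNReal.mul_inv_cancel (by norm_num) (by norm_num)])
      (by rw [one_le_div hq0]; linarith : 1 ≤ 1/q)
    calc S = (S ^ q) ^ (1/q) := by
          rw [← ENNReal.rpow_mul, mul_one_div_cancel hq0.ne', ENNReal.rpow_one]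
      _ ≤ (2⁻¹ * a + 2⁻¹ * b) ^ (1/q) := ENNReal.rpow_le_rpow h1 (by positivity)
      _ ≤ 2⁻¹ * a ^ (1/q) + 2⁻¹ * b ^ (1/q) := h3
  have h2S : 2 * S ≤ a ^ (1/q) + b ^ (1/q) := by
    calc 2 * S ≤ 2 * (2⁻¹ * a ^ (1/q) + 2⁻¹ * b ^ (1/q)) := mul_le_mul_right hS2 2
      _ = a ^ (1/q) + b ^ (1/q) := by
          rw [mul_add, ← mul_assoc, ← mul_assoc,
            ENNReal.mul_inv_cancel (by norm_num) (by norm_num), one_mul, one_mul]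
  -- convert to reals
  have hq2p : 1/q = 2/p := by rw [hq]; field_simp
  rw [hq2p] at h2S
  have hRfin : a ^ (2/p) + b ^ (2/p) ≠ ⊤ := by
    apply ENNReal.add_ne_top.mpr
    exact ⟨(ENNReal.rpow_lt_top_of_nonneg (by positivity) hfa).ne,
      (ENNReal.rpow_lt_top_of_nonneg (by positivity) hfb).ne⟩
  have hcomp := ENNReal.toReal_mono hRfin h2S
  have eL : (2 * S).toReal = 2 * ((Jf μ p u ^ (2/p)).toReal
      + (p-1) * (Jf μ p v ^ (2/p)).toReal) := by
    rw [ENNReal.toReal_mul, hS, hq2p, ENNReal.toReal_add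
      (ENNReal.rpow_lt_top_of_nonneg (by positivity) hfu).ne
      (ENNReal.mul_lt_top ENNReal.ofReal_lt_top
        (ENNReal.rpow_lt_top_of_nonneg (by positivity) hfv)).ne,
      ENNReal.toReal_mul, ENNReal.toReal_ofReal (by linarith : (0:ℝ) ≤ p - 1)]
    norm_num
  have eR : (a ^ (2/p) + b ^ (2/p)).toReal = (a ^ (2/p)).toReal + (b ^ (2/p)).toReal :=
    ENNReal.toReal_add (ENNReal.rpow_lt_top_of_nonneg (by positivity) hfa).ne
      (ENNReal.rpow_lt_top_of_nonneg (by positivity) hfb).ne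
  rw [eL, eR] at hcomp
  rw [np_sq hp u, np_sq hp v, np_sq hp (u+v), np_sq hp (u-v), ← ha, ← hb]
  linarith


end Part3

section Part4


variable {Ω : Type*} [MeasurableSpace Ω] {μ : Measure Ω} {p : ℝ}

/-- the weight function w = |f|^{p-2} f -/
def wf (p : ℝ) {Ω : Type*} (f : Ω → ℂ) : Ω → ℂ :=
  fun x => ((‖f x‖ ^ (p - 2) : ℝ)) • f x

lemma np_pow_p (hp : 1 < p) (f : Ω → ℂ) (hf : MemLp f (ENNReal.ofReal p) μ) :
    np μ p f ^ p = (Jf μ p f).toReal := by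
  rw [np_eq hp f, ENNReal.toReal_rpow, ← ENNReal.rpow_mul,
    one_div_mul_cancel (by positivity : p ≠ 0), ENNReal.rpow_one]

lemma wf_meas (hf : AEStronglyMeasurable f μ) : AEStronglyMeasurable (wf p f) μ := by
  rw [aestronglyMeasurable_iff_aemeasurable]
  have h1 : AEMeasurable (fun x => ‖f x‖) μ :=
    continuous_norm.measurable.comp_aemeasurable hf.aemeasurable
  have h2 : AEMeasurable (fun x => (‖f x‖) ^ (p-2)) μ :=
    h1.pow aemeasurable_const
  have h3 : AEMeasurable (fun x => ((‖f x‖ ^ (p-2) : ℝ) : ℂ)) μ :=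
    Complex.measurable_ofReal.comp_aemeasurable h2
  have h4 := h3.mul hf.aemeasurable
  apply h4.congr
  apply Filter.EventuallyEq.of_eq
  funext x
  simp [wf, Complex.real_smul]

lemma norm_wf_mul (hp : 1 < p) (f h : Ω → ℂ) (x : Ω) :
    ‖(starRingEnd ℂ) (h x) * wf p f x‖ = ‖h x‖ * ‖f x‖ ^ (p-1) := by
  rw [norm_mul, wf, norm_smul]
  rw [Complex.norm_conj, Real.norm_eq_abs,
    abs_of_nonneg (Real.rpow_nonneg (norm_nonneg _) _)]
  by_cases h0 : f x = 0
  · rw [h0]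
    simp only [map_zero, norm_zero, mul_zero]
    rw [Real.zero_rpow (by linarith : p - 1 ≠ 0)]
    ring
  · have habs : ‖f x‖ ≠ 0 := norm_ne_zero_iff.mpr h0
    rw [
      show p - 1 = (p-2) + 1 by ring, Real.rpow_add_one habs]

/-- Hölder bound in ℝ≥0∞ for the product -/
lemma holder_lint (hp : 1 < p) {f h : Ω → ℂ} (hf : AEStronglyMeasurable f μ)
    (hh : AEStronglyMeasurable h μ) :
    ∫⁻ x, (‖h x‖₊ : ℝ≥0∞) * (‖f x‖₊ : ℝ≥0∞) ^ (p-1) ∂μ ≤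
      (Jf μ p h) ^ (1/p) * (Jf μ p f) ^ ((p-1)/p) := by
  have hp1 : p - 1 ≠ 0 := by linarith
  have hpq := Real.HolderConjugate.conjExponent hp
  have hB : AEMeasurable (fun x => (‖f x‖₊ : ℝ≥0∞) ^ (p-1)) μ :=
    hf.enorm.pow (aemeasurable_const (b := p - 1))
  have hH := ENNReal.lintegral_mul_le_Lp_mul_Lq μ hpq hh.enorm hB
  simp only [Pi.mul_apply] at hH
  refine le_trans hH (le_of_eq ?_)
  rw [Jf, Jf]
  congr 1
  have e1 : ∀ x : Ω, ((‖f x‖₊ : ℝ≥0∞) ^ (p-1)) ^ p.conjExponent = (‖f x‖₊ : ℝ≥0∞) ^ p := by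
    intro x
    rw [← ENNReal.rpow_mul, Real.conjExponent]
    congr 1
    field_simp
  rw [lintegral_congr e1]
  congr 1
  rw [Real.conjExponent, one_div_div]

lemma integrable_conj_wf (hp : 1 < p) {f h : Ω → ℂ} (hf : MemLp f (ENNReal.ofReal p) μ)
    (hh : MemLp h (ENNReal.ofReal p) μ) :
    Integrable (fun x => (starRingEnd ℂ) (h x) * wf p f x) μ := by
  constructor
  · exact (Complex.continuous_conj.comp_aestronglyMeasurable hh.1).mul (wf_meas hf.1)
  · rw [hasFiniteIntegral_def]
    show ∫⁻ x, (‖(starRingEnd ℂ) (h x) * wf p f x‖₊ : ℝ≥0∞) ∂μ < ⊤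
    have he : ∀ x, (‖(starRingEnd ℂ) (h x) * wf p f x‖₊ : ℝ≥0∞) =
        (‖h x‖₊ : ℝ≥0∞) * (‖f x‖₊ : ℝ≥0∞) ^ (p-1) := by
      intro x
      rw [← ofReal_norm_eq_coe_nnnorm, norm_wf_mul hp f h x, ENNReal.ofReal_mul (norm_nonneg _),
        ofReal_norm_eq_coe_nnnorm]
      congr 1
      rw [← ofReal_norm_eq_coe_nnnorm,
        ENNReal.ofReal_rpow_of_nonneg (norm_nonneg _) (by linarith : (0:ℝ) ≤ p - 1)]
    rw [lintegral_congr he]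
    exact lt_of_le_of_lt (holder_lint hp hf.1 hh.1)
      (ENNReal.mul_lt_top
        (ENNReal.rpow_lt_top_of_nonneg (div_nonneg zero_le_one (by linarith)) (Jf_fin hp hh)).ne.lt_top
        (ENNReal.rpow_lt_top_of_nonneg (div_nonneg (by linarith) (by linarith)) (Jf_fin hp hf)))

lemma re_int_le (hp : 1 < p) {f h : Ω → ℂ} (hf : MemLp f (ENNReal.ofReal p) μ)
    (hh : MemLp h (ENNReal.ofReal p) μ) :
    (∫ x, (starRingEnd ℂ) (h x) * wf p f x ∂μ).re ≤ np μ p h * np μ p f ^ (p-1) := by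
  have habsmeas : AEMeasurable (fun x => (‖f x‖) ^ (p-1)) μ :=
    (continuous_norm.measurable.comp_aemeasurable hf.1.aemeasurable).pow
      aemeasurable_const
  calc (∫ x, (starRingEnd ℂ) (h x) * wf p f x ∂μ).re
      ≤ ‖∫ x, (starRingEnd ℂ) (h x) * wf p f x ∂μ‖ := by
        exact Complex.re_le_norm _
    _ ≤ ∫ x, ‖(starRingEnd ℂ) (h x) * wf p f x‖ ∂μ := norm_integral_le_integral_norm _
    _ = ∫ x, ‖h x‖ * ‖f x‖ ^ (p-1) ∂μ := by
        apply integral_congr_ae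
        apply Filter.EventuallyEq.of_eq
        funext x
        exact norm_wf_mul hp f h x
    _ = (∫⁻ x, ENNReal.ofReal (‖h x‖ * ‖f x‖ ^ (p-1)) ∂μ).toReal := by
        apply integral_eq_lintegral_of_nonneg_ae
        · apply Filter.Eventually.of_forall
          intro x
          exact mul_nonneg (norm_nonneg _) (Real.rpow_nonneg (norm_nonneg _) _)
        · exact hh.1.norm.mul (aestronglyMeasurable_iff_aemeasurable.mpr habsmeas)
    _ ≤ ((Jf μ p h) ^ (1/p) * (Jf μ p f) ^ ((p-1)/p)).toReal := by
        apply ENNReal.toReal_mono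
        · exact (ENNReal.mul_lt_top
            (ENNReal.rpow_lt_top_of_nonneg (div_nonneg zero_le_one (by linarith)) (Jf_fin hp hh)).ne.lt_top
            (ENNReal.rpow_lt_top_of_nonneg (div_nonneg (by linarith) (by linarith)) (Jf_fin hp hf))).ne
        · have he : ∀ x, ENNReal.ofReal (‖h x‖ * ‖f x‖ ^ (p-1)) =
              (‖h x‖₊ : ℝ≥0∞) * (‖f x‖₊ : ℝ≥0∞) ^ (p-1) := by
            intro x
            rw [ENNReal.ofReal_mul (norm_nonneg _), ofReal_norm_eq_coe_nnnorm]
            congr 1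
            rw [← ofReal_norm_eq_coe_nnnorm,
              ENNReal.ofReal_rpow_of_nonneg (norm_nonneg _)
                (by linarith : (0:ℝ) ≤ p - 1)]
          rw [lintegral_congr he]
          exact holder_lint hp hf.1 hh.1
    _ = np μ p h * np μ p f ^ (p-1) := by
        rw [ENNReal.toReal_mul, np_eq hp h, np_eq hp f, ENNReal.toReal_rpow,
          ← ENNReal.rpow_mul]
        congr 2
        field_simp

lemma re_int_self (hp : 1 < p) {f : Ω → ℂ} (hf : MemLp f (ENNReal.ofReal p) μ) :
    (∫ x, (starRingEnd ℂ) (f x) * wf p f x ∂μ).re = (Jf μ p f).toReal := by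
  have hptw : ∀ x, (starRingEnd ℂ) (f x) * wf p f x = ((‖f x‖ ^ p : ℝ) : ℂ) := by
    intro x
    by_cases h0 : f x = 0
    · rw [h0]
      simp [wf, Real.zero_rpow (by positivity : p ≠ 0)]
    · have habs : (0:ℝ) < ‖f x‖ := norm_pos_iff.mpr h0
      rw [wf, Complex.real_smul, mul_comm ((starRingEnd ℂ) (f x)),
        mul_assoc, Complex.mul_conj,
        show ((Complex.normSq (f x) : ℝ) : ℂ) = ((‖f x‖ ^ (2:ℕ) : ℝ) : ℂ) by
          rw [Complex.sq_norm],
        ← Complex.ofReal_mul]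
      congr 1
      rw [← Real.rpow_natCast (‖f x‖) 2, ← Real.rpow_add habs]
      congr 1
      push_cast
      ring

  rw [show (fun x => (starRingEnd ℂ) (f x) * wf p f x) = fun x => ((‖f x‖ ^ p : ℝ) : ℂ)
    from funext hptw]
  rw [show (∫ x, ((‖f x‖ ^ p : ℝ) : ℂ) ∂μ)
      = ((∫ x, ‖f x‖ ^ p ∂μ : ℝ) : ℂ) from integral_ofReal, Complex.ofReal_re]
  have habsmeas : AEMeasurable (fun x => (‖f x‖) ^ p) μ :=
    (continuous_norm.measurable.comp_aemeasurable hf.1.aemeasurable).pow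
      aemeasurable_const
  rw [integral_eq_lintegral_of_nonneg_ae
    (Filter.Eventually.of_forall fun x => by positivity)
    (aestronglyMeasurable_iff_aemeasurable.mpr habsmeas)]
  congr 1
  apply lintegral_congr
  intro x
  rw [← ofReal_norm_eq_coe_nnnorm,
    ENNReal.ofReal_rpow_of_nonneg (norm_nonneg _) (by linarith : (0:ℝ) ≤ p)]


end Part4

end Stmt11

open Stmt11

/-- for `1 < p ≤ 2`, the squared `L^p` norm is `(p-1)`-convex:
`E(f₂) ≥ E(f₁) + ⟨f₂ - f₁, ∇E(f₁)⟩ + (p-1)‖f₂-f₁‖_p²`. -/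
theorem stmt_11 {Ω : Type*} [MeasurableSpace Ω] (μ : Measure Ω) (p : ℝ)
    (hp : 1 < p) (hp2 : p ≤ 2) :
    ∀ f₁ f₂ : Ω → ℂ, MemLp f₁ (ENNReal.ofReal p) μ → MemLp f₂ (ENNReal.ofReal p) μ →
      np μ p f₁ ^ 2 + pairL μ (f₂ - f₁) (gradE μ p f₁) + (p - 1) * np μ p (f₂ - f₁) ^ 2 ≤
        np μ p f₂ ^ 2 := by
  intro f₁ f₂ hf₁ hf₂
  have hppos : (0:ℝ) < p := by linarith
  by_cases h0 : eLpNorm f₁ (ENNReal.ofReal p) μ = 0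
  · -- degenerate case f₁ = 0 a.e.
    have hz : f₁ =ᵐ[μ] 0 := (eLpNorm_eq_zero_iff hf₁.1
      (by simp [ENNReal.ofReal_eq_zero]; linarith)).mp h0
    have hnp1 : np μ p f₁ = 0 := by rw [np, h0, ENNReal.toReal_zero]
    have hpair : pairL μ (f₂ - f₁) (gradE μ p f₁) = 0 := by
      rw [pairL]
      have hz2 : (∫ x, (starRingEnd ℂ) ((f₂ - f₁) x) * gradE μ p f₁ x ∂μ) = 0 := by
        rw [integral_congr_ae (g := fun _ => (0:ℂ))
          (by filter_upwards [hz] with x hx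
              rw [gradE, hx]
              simp)]
        simp
      rw [hz2]
      simp
    have hnp12 : np μ p (f₂ - f₁) = np μ p f₂ := by
      rw [np, np, eLpNorm_congr_ae (show f₂ - f₁ =ᵐ[μ] f₂ by
        filter_upwards [hz] with x hx
        simp [hx])]
    rw [hnp1, hpair, hnp12]
    have hsq : 0 ≤ np μ p f₂ ^ 2 := sq_nonneg _
    nlinarith
  -- main case
  have hN1pos : 0 < np μ p f₁ := ENNReal.toReal_pos h0 hf₁.2.ne
  set g : Ω → ℂ := f₂ - f₁ with hg
  have hgmem : MemLp g (ENNReal.ofReal p) μ := hf₂.sub hf₁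
  set N₁ := np μ p f₁ with hN₁
  set c₀ : ℝ := N₁ ^ (2 - p) with hc₀
  have hc₀pos : 0 < c₀ := Real.rpow_pos_of_pos hN1pos _
  set φ : ℝ → Ω → ℂ := fun t x => f₁ x + (t : ℂ) * g x with hφ
  have hφmem : ∀ t : ℝ, MemLp (φ t) (ENNReal.ofReal p) μ := fun t =>
    hf₁.add (hgmem.const_smul ((t:ℝ) : ℂ))
  set ψ : ℝ → ℝ := fun t => np μ p (φ t) ^ 2 with hψ
  have hφ0 : φ 0 = f₁ := by
    funext x
    simp [hφ]
  have hφ1 : φ 1 = f₂ := by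
    funext x
    simp [hφ, hg]
  have hψ0 : ψ 0 = N₁ ^ 2 := by rw [hψ]; simp only; rw [hφ0]
  have hψ1 : ψ 1 = np μ p f₂ ^ 2 := by rw [hψ]; simp only; rw [hφ1]
  have hgrad : gradE μ p f₁ = fun x => c₀ • wf p f₁ x := by
    funext x
    rw [gradE, wf, hc₀, hN₁, smul_smul]
  set pr : ℝ := pairL μ (f₂ - f₁) (gradE μ p f₁) with hpr
  set Pg : ℝ := (∫ x, (starRingEnd ℂ) (g x) * wf p f₁ x ∂μ).re with hPg
  have hprEq : pr = 2 * (c₀ * Pg) := by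
    rw [hpr, pairL, hgrad]
    congr 1
    have e : (∫ x, (starRingEnd ℂ) ((f₂ - f₁) x) * (c₀ • wf p f₁ x) ∂μ)
        = c₀ • ∫ x, (starRingEnd ℂ) (g x) * wf p f₁ x ∂μ := by
      rw [← integral_smul]
      congr 1
      funext x
      rw [mul_smul_comm, hg]
    rw [e, Complex.smul_re, smul_eq_mul]
  have hJf1 : (Jf μ p f₁).toReal = N₁ ^ p := (np_pow_p hp f₁ hf₁).symm
  -- Step A
  have stepA : ∀ t : ℝ, 0 < t → t * pr ≤ ψ t - ψ 0 := by
    intro t ht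
    have hsplit : (∫ x, (starRingEnd ℂ) (φ t x) * wf p f₁ x ∂μ).re
        = N₁ ^ p + t * Pg := by
      have e : (fun x => (starRingEnd ℂ) (φ t x) * wf p f₁ x)
          = fun x => ((starRingEnd ℂ) (f₁ x) * wf p f₁ x)
              + (t:ℂ) • ((starRingEnd ℂ) (g x) * wf p f₁ x) := by
        funext x
        simp only [hφ, map_add, map_mul, Complex.conj_ofReal, smul_eq_mul]
        ring
      have hint2 : Integrable (fun x => ((t:ℝ):ℂ) • ((starRingEnd ℂ) (g x) * wf p f₁ x)) μ :=
        (integrable_conj_wf hp hf₁ hgmem).smul ((t:ℝ):ℂ)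
      rw [e, integral_add (integrable_conj_wf hp hf₁ hf₁) hint2, integral_smul,
        Complex.add_re, re_int_self hp hf₁, hJf1]
      congr 1
      rw [hPg, smul_eq_mul, Complex.mul_re]
      simp
    have hbound := re_int_le hp hf₁ (hφmem t)
    rw [hsplit] at hbound
    -- t * Pg ≤ np (φ t) * N₁^{p-1} - N₁^p
    have hcollapse1 : c₀ * N₁ ^ (p-1) = N₁ := by
      rw [hc₀, ← Real.rpow_add hN1pos, show 2 - p + (p-1) = 1 by ring, Real.rpow_one]
    have hcollapse2 : c₀ * N₁ ^ p = N₁ ^ 2 := by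
      rw [hc₀, ← Real.rpow_add hN1pos, show 2 - p + p = (2:ℝ) by ring,
        ← Real.rpow_natCast N₁ 2]
      norm_num
    have hsq := two_mul_le_add_sq (np μ p (φ t)) N₁
    have hnpφ : 0 ≤ np μ p (φ t) := ENNReal.toReal_nonneg
    calc t * pr = 2 * c₀ * (N₁ ^ p + t * Pg) - 2 * c₀ * N₁ ^ p := by
          rw [hprEq]; ring
      _ ≤ 2 * c₀ * (np μ p (φ t) * N₁ ^ (p-1)) - 2 * c₀ * N₁ ^ p := by
          have := mul_le_mul_of_nonneg_left hbound (by linarith : (0:ℝ) ≤ 2 * c₀)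
          linarith
      _ = 2 * np μ p (φ t) * N₁ - 2 * N₁ ^ 2 := by
          rw [show 2 * c₀ * (np μ p (φ t) * N₁ ^ (p-1)) = 2 * np μ p (φ t) * (c₀ * N₁ ^ (p-1))
            by ring, hcollapse1, show 2 * c₀ * N₁ ^ p = 2 * (c₀ * N₁ ^ p) by ring, hcollapse2]
      _ ≤ np μ p (φ t) ^ 2 + N₁ ^ 2 - 2 * N₁ ^ 2 := by linarith
      _ = ψ t - ψ 0 := by rw [hψ0]; ring
  -- midpoint inequality
  set c : ℝ := (p-1) * np μ p g ^ 2 with hc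
  have hcnn : 0 ≤ c := mul_nonneg (by linarith) (sq_nonneg _)
  have midpoint : ∀ u : ℝ, 0 < u → 2 * ψ (u/2) + c * u^2 / 2 ≤ ψ 0 + ψ u := by
    intro u hu
    set v : Ω → ℂ := fun x => (((u/2 : ℝ)):ℂ) * g x with hv
    have hvmem : MemLp v (ENNReal.ofReal p) μ := hgmem.const_smul (((u/2 : ℝ)):ℂ)
    have hBB := npBound hp hp2 (hφmem (u/2)) hvmem
    have hadd : φ (u/2) + v = φ u := by
      funext x
      simp only [hφ, hv, Pi.add_apply]
      push_cast
      ring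
    have hsub : φ (u/2) - v = φ 0 := by
      funext x
      simp only [hφ, hv, Pi.sub_apply]
      push_cast
      ring
    have hnpv : np μ p v = (u/2) * np μ p g := by
      have : v = (((u/2 : ℝ)):ℂ) • g := by funext x; simp [hv]
      rw [np, this, eLpNorm_const_smul, ENNReal.toReal_mul, toReal_enorm,
        Complex.norm_real, Real.norm_eq_abs, abs_of_pos (by linarith)]
      rfl
    rw [hadd, hsub, hnpv] at hBB
    have e2 : 2*(p-1) * ((u/2) * np μ p g)^2 = c * u^2 / 2 := by rw [hc]; ring
    rw [e2] at hBB
    simp only [hψ]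
    linarith [hBB]
  -- dyadic induction
  have key : ∀ n : ℕ, 2^n * (ψ ((1/2)^n) - c * ((1/2)^n)^2 - ψ 0) ≤ ψ 1 - c - ψ 0 := by
    intro n
    induction n with
    | zero => norm_num
    | succ n ih =>
      have hmid := midpoint ((1/2)^n) (by positivity)
      have hpe : (1/2:ℝ)^(n+1) = (1/2)^n / 2 := by rw [pow_succ]; ring
      have h2n : (0:ℝ) < 2^n := by positivity
      calc (2:ℝ)^(n+1) * (ψ ((1/2)^(n+1)) - c * ((1/2)^(n+1))^2 - ψ 0)
          = 2^n * (2 * ψ ((1/2)^n / 2) - 2 * c * ((1/2)^n / 2)^2 - 2 * ψ 0) := by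
            rw [hpe]; ring
        _ ≤ 2^n * (ψ ((1/2)^n) - c * ((1/2)^n)^2 - ψ 0) := by
            apply mul_le_mul_of_nonneg_left _ h2n.le
            nlinarith [hmid]
        _ ≤ ψ 1 - c - ψ 0 := ih
  have key2 : ∀ n : ℕ, pr - c * (1/2)^n ≤ ψ 1 - ψ 0 - c := by
    intro n
    have h2 := stepA ((1/2)^n) (by positivity)
    have h3 := key n
    have hpow : (2:ℝ)^n * (1/2)^n = 1 := by
      rw [← mul_pow]
      norm_num
    have h2n : (0:ℝ) < 2^n := by positivity
    nlinarith [h2, h3, hpow, h2n]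
  -- pass to the limit
  have hlim : Filter.Tendsto (fun n : ℕ => pr - c * (1/2)^n) Filter.atTop (nhds pr) := by
    have h1 : Filter.Tendsto (fun n : ℕ => ((1/2:ℝ))^n) Filter.atTop (nhds 0) :=
      tendsto_pow_atTop_nhds_zero_of_lt_one (by norm_num) (by norm_num)
    have h2 := ((h1.const_mul c).const_sub pr)
    simpa using h2
  have hfinal : pr ≤ ψ 1 - ψ 0 - c := le_of_tendsto hlim (Filter.Eventually.of_forall key2)
  rw [hψ1, hψ0] at hfinal
  rw [hc] at hfinal
  have hgng : np μ p g = np μ p (f₂ - f₁) := by rw [hg]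
  linarith [hfinal]


end
end

section
/- For f, g complex-valued functions with f(x) + tg(x) ≠ 0 for all t ∈ ℝ (simple functions on sets of finite measure), 1 < p ≤ 2, the function t ↦ ‖f+tg‖_p² satisfies d²/dt² ‖f+tg‖_p² ≥ 2(p-1)‖g‖_p² for all t. -/
open MeasureTheory

noncomputable section

lemma poly_deriv (A C B s : ℝ) :
    HasDerivAt (fun u : ℝ => A + 2*C*u + B*u^2) (2*C + 2*B*s) s := by
  have h1 : HasDerivAt (fun u : ℝ => A + 2*C*u + B*u^2)
      (0 + 2*C*1 + B*(2*s^1)) s := by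
    exact ((hasDerivAt_const s A).add ((hasDerivAt_id s).const_mul (2*C))).add
      ((hasDerivAt_pow 2 s).const_mul B)
  convert h1 using 1; push_cast; ring

lemma term_deriv1 (p A C B s : ℝ) (hpos : 0 < A + 2*C*s + B*s^2) :
    HasDerivAt (fun u : ℝ => (A + 2*C*u + B*u^2) ^ (p/2))
      ((p/2) * (A + 2*C*s + B*s^2) ^ (p/2 - 1) * (2*C + 2*B*s)) s := by
  have h := (poly_deriv A C B s).rpow_const (p := p/2) (Or.inl hpos.ne')
  convert h using 1; ring

lemma term_deriv2 (p A C B s : ℝ) (hpos : 0 < A + 2*C*s + B*s^2) :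
    HasDerivAt (fun u : ℝ => (p/2) * (A + 2*C*u + B*u^2) ^ (p/2 - 1) * (2*C + 2*B*u))
      ((p/2) * ((p/2-1) * (A + 2*C*s + B*s^2) ^ (p/2 - 2) * (2*C + 2*B*s)^2
        + (A + 2*C*s + B*s^2) ^ (p/2 - 1) * (2*B))) s := by
  have h1 : HasDerivAt (fun u : ℝ => (A + 2*C*u + B*u^2) ^ (p/2 - 1))
      ((p/2-1) * (A + 2*C*s + B*s^2) ^ (p/2 - 1 - 1) * (2*C + 2*B*s)) s := by
    have h := (poly_deriv A C B s).rpow_const (p := p/2 - 1) (Or.inl hpos.ne')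
    convert h using 1; ring
  have h2 : HasDerivAt (fun u : ℝ => 2*C + 2*B*u) (2*B) s := by
    have := ((hasDerivAt_id s).const_mul (2*B)).const_add (2*C)
    simpa using this
  have h3 := (h1.mul h2).const_mul (p/2)
  have he : p/2 - 1 - 1 = p/2 - 2 := by ring
  rw [he] at h3
  have e : (fun u : ℝ => (p/2) * (A + 2*C*u + B*u^2) ^ (p/2 - 1) * (2*C + 2*B*u)) =
      (fun y => p / 2 * ((A + 2 * C * y + B * y ^ 2) ^ (p / 2 - 1) * (2 * C + 2 * B * y))) := by
    funext u; ring
  rw [e]; exact h3.congr_deriv (by ring)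

lemma term_bound (p A C B s : ℝ) (hpos : 0 < A + 2*C*s + B*s^2) (hB : 0 ≤ B)
    (hCS : C^2 ≤ A*B) (hp : 1 < p) (hp2 : p ≤ 2) :
    p*(p-1) * (A + 2*C*s + B*s^2) ^ (p/2 - 1) * B ≤
      (p/2) * ((p/2-1) * (A + 2*C*s + B*s^2) ^ (p/2 - 2) * (2*C + 2*B*s)^2
        + (A + 2*C*s + B*s^2) ^ (p/2 - 1) * (2*B)) := by
  set P := A + 2*C*s + B*s^2 with hP
  have hq2 : (2*C + 2*B*s)^2 ≤ 4 * P * B := by nlinarith [sq_nonneg (C - B*s), sq_nonneg s]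
  have hX : (0:ℝ) ≤ P ^ (p/2 - 2) := Real.rpow_nonneg hpos.le _
  have hXP : P ^ (p/2 - 1) = P ^ (p/2 - 2) * P := by
    rw [← Real.rpow_add_one hpos.ne']; ring_nf
  have hneg : p/2 - 1 ≤ 0 := by linarith
  have key : (p/2-1) * (4 * P * B) * (P ^ (p/2-2)) ≤ (p/2-1) * (2*C + 2*B*s)^2 * (P ^ (p/2-2)) := by
    apply mul_le_mul_of_nonneg_right _ hX
    exact mul_le_mul_of_nonpos_left hq2 hneg
  rw [hXP]
  nlinarith [key, mul_nonneg hX (mul_nonneg hpos.le hB)]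


lemma normSq_line (z w : ℂ) (t : ℝ) :
    Complex.normSq (z + t • w) =
      Complex.normSq z + 2*((starRingEnd ℂ) z * w).re*t + Complex.normSq w*t^2 := by
  simp only [Complex.normSq_apply, Complex.add_re, Complex.add_im, Complex.smul_re,
    Complex.smul_im, Complex.mul_re, Complex.conj_re, Complex.conj_im, smul_eq_mul]
  ring

lemma abs_rpow_eq (z : ℂ) (p : ℝ) :
    ‖z‖ ^ p = Complex.normSq z ^ (p/2) := by
  rw [Complex.norm_def, Real.sqrt_eq_rpow, ← Real.rpow_mul (Complex.normSq_nonneg z)]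
  ring_nf

lemma cs_ineq (z w : ℂ) :
    ((starRingEnd ℂ) z * w).re ^ 2 ≤ Complex.normSq z * Complex.normSq w := by
  have h1 : ((starRingEnd ℂ) z * w).re ^ 2 ≤ Complex.normSq ((starRingEnd ℂ) z * w) := by
    rw [Complex.normSq_apply]; nlinarith [sq_nonneg (((starRingEnd ℂ) z * w).im)]
  simpa [Complex.normSq_mul, Complex.normSq_conj] using h1


lemma holder_sum {ι : Type*} (R : Finset ι) (x y : ι → ℝ) (θ : ℝ)
    (hθ0 : 0 < θ) (hθ1 : θ ≤ 1)
    (hx : ∀ v ∈ R, 0 ≤ x v) (hy : ∀ v ∈ R, 0 ≤ y v)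
    (hX : 0 < ∑ v ∈ R, x v) (hY : 0 < ∑ v ∈ R, y v) :
    ∑ v ∈ R, (x v)^θ * (y v)^(1-θ) ≤ (∑ v ∈ R, x v)^θ * (∑ v ∈ R, y v)^(1-θ) := by
  set X := ∑ v ∈ R, x v with hXd
  set Y := ∑ v ∈ R, y v with hYd
  have hK : 0 ≤ X^θ * Y^(1-θ) :=
    mul_nonneg (Real.rpow_nonneg hX.le _) (Real.rpow_nonneg hY.le _)
  have step : ∀ v ∈ R, (x v)^θ * (y v)^(1-θ) ≤
      (X^θ * Y^(1-θ)) * (θ * (x v / X) + (1-θ) * (y v / Y)) := by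
    intro v hv
    have e1 : x v = X * (x v / X) := by field_simp
    have e2 : y v = Y * (y v / Y) := by field_simp
    have hdx : 0 ≤ x v / X := div_nonneg (hx v hv) hX.le
    have hdy : 0 ≤ y v / Y := div_nonneg (hy v hv) hY.le
    have key : (x v / X)^θ * (y v / Y)^(1-θ) ≤ θ * (x v / X) + (1-θ) * (y v / Y) :=
      Real.geom_mean_le_arith_mean2_weighted hθ0.le (by linarith) hdx hdy (by ring)
    calc (x v)^θ * (y v)^(1-θ)
        = (X*(x v/X))^θ * (Y*(y v/Y))^(1-θ) := by rw [← e1, ← e2]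
      _ = (X^θ*(x v/X)^θ) * (Y^(1-θ)*(y v/Y)^(1-θ)) := by
          rw [Real.mul_rpow hX.le hdx, Real.mul_rpow hY.le hdy]
      _ = (X^θ * Y^(1-θ)) * ((x v/X)^θ * (y v/Y)^(1-θ)) := by ring
      _ ≤ (X^θ * Y^(1-θ)) * (θ * (x v / X) + (1-θ) * (y v / Y)) :=
          mul_le_mul_of_nonneg_left key hK
  calc ∑ v ∈ R, (x v)^θ * (y v)^(1-θ)
      ≤ ∑ v ∈ R, (X^θ * Y^(1-θ)) * (θ * (x v / X) + (1-θ) * (y v / Y)) :=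
        Finset.sum_le_sum step
    _ = (X^θ * Y^(1-θ)) * (θ * (X / X) + (1-θ) * (Y / Y)) := by
        rw [← Finset.mul_sum, Finset.sum_add_distrib, ← Finset.mul_sum, ← Finset.mul_sum,
          ← Finset.sum_div, ← Finset.sum_div, ← hXd, ← hYd]
    _ = X^θ * Y^(1-θ) := by
        rw [div_self hX.ne', div_self hY.ne']; ring




lemma simple_integral_eq {Ω : Type*} [MeasurableSpace Ω] (μ : Measure Ω) (p : ℝ) (hp0 : 0 < p)
    (sh : SimpleFunc Ω (ℂ × ℂ)) (hsh : Integrable sh μ)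
    (u : Ω → ℂ) (hu : MemLp u (ENNReal.ofReal p) μ)
    (φ : ℂ × ℂ → ℝ) (hφ : ∀ x, ‖u x‖ ^ p = φ (sh x)) (hφ0 : φ 0 = 0) :
    ∫ x, ‖u x‖ ^ p ∂μ = ∑ v ∈ sh.range, (μ (sh ⁻¹' {v})).toReal * φ v := by
  have hpne : ENNReal.ofReal p ≠ 0 := by
    simp only [ne_eq, ENNReal.ofReal_eq_zero, not_le]; exact hp0
  have hGint : Integrable (fun x => ‖u x‖ ^ p) μ := by
    have h := hu.integrable_norm_rpow hpne ENNReal.ofReal_ne_top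
    rwa [ENNReal.toReal_ofReal hp0.le] at h
  have hint : Integrable (sh.map φ) μ := by
    apply hGint.congr
    exact Filter.Eventually.of_forall fun x => by
      rw [SimpleFunc.map_apply, ← hφ]
  have h1 : ∫ x, ‖u x‖ ^ p ∂μ = (sh.map φ).integral μ := by
    rw [SimpleFunc.integral_eq_integral _ hint]
    apply integral_congr_ae
    exact Filter.Eventually.of_forall fun x => by simp only [SimpleFunc.map_apply]; exact hφ x
  rw [h1, SimpleFunc.map_integral sh φ hsh hφ0]
  simp [smul_eq_mul, Measure.real]

lemma np_sq_eq {Ω : Type*} [MeasurableSpace Ω] (μ : Measure Ω) (p : ℝ) (hp0 : 0 < p)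
    (u : Ω → ℂ) (hu : MemLp u (ENNReal.ofReal p) μ) :
    np μ p u ^ 2 = (∫ x, ‖u x‖ ^ p ∂μ) ^ (2/p) := by
  have hpne : ENNReal.ofReal p ≠ 0 := by
    simp only [ne_eq, ENNReal.ofReal_eq_zero, not_le]; exact hp0
  have hInn : 0 ≤ ∫ x, ‖u x‖ ^ p ∂μ :=
    integral_nonneg fun x => Real.rpow_nonneg (norm_nonneg _) _
  have h := hu.eLpNorm_eq_integral_rpow_norm hpne ENNReal.ofReal_ne_top
  rw [ENNReal.toReal_ofReal hp0.le] at h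
  rw [np, h, ENNReal.toReal_ofReal (Real.rpow_nonneg hInn _)]
  rw [← Real.rpow_natCast ((∫ x, ‖u x‖ ^ p ∂μ) ^ p⁻¹) 2, ← Real.rpow_mul hInn]
  norm_num
  rw [show p⁻¹ * 2 = 2/p by ring]

/-- for `1 < p ≤ 2` and simple `f, g ∈ L^p` with `f(x) + t g(x) ≠ 0`
for all `x` and all real `t`, the map `t ↦ ‖f + t g‖_p²` satisfies
`d²/dt² ‖f+tg‖_p² ≥ 2(p-1)‖g‖_p²`. -/
theorem stmt_12 {Ω : Type*} [MeasurableSpace Ω] (μ : Measure Ω) (p : ℝ)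
    (hp : 1 < p) (hp2 : p ≤ 2) (f g : Ω → ℂ)
    (hf : MemLp f (ENNReal.ofReal p) μ) (hg : MemLp g (ENNReal.ofReal p) μ)
    (hfsimple : ∃ sf : SimpleFunc Ω ℂ, f = sf) (hgsimple : ∃ sg : SimpleFunc Ω ℂ, g = sg)
    (hne : ∀ (x : Ω) (t : ℝ), f x + t • g x ≠ 0) :
    ∀ t : ℝ, ∃ c : ℝ,
      HasDerivAt (deriv fun s : ℝ => np μ p (f + s • g) ^ 2) c t ∧
      2 * (p - 1) * np μ p g ^ 2 ≤ c := by
  obtain ⟨sf, rfl⟩ := hfsimple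
  obtain ⟨sg, rfl⟩ := hgsimple
  intro t
  have hp0 : (0:ℝ) < p := by linarith
  have hp20 : (0:ℝ) < 2/p := by positivity
  have hp2ne : (2/p : ℝ) ≠ 0 := hp20.ne'
  have hpne : ENNReal.ofReal p ≠ 0 := by
    simp only [ne_eq, ENNReal.ofReal_eq_zero, not_le]; exact hp0
  set sh := sf.pair sg with hshdef
  set R := sh.range with hRdef
  set m : ℂ × ℂ → ℝ := fun v => (μ (sh ⁻¹' {v})).toReal with hmdef
  have hm0 : ∀ v, 0 ≤ m v := fun v => ENNReal.toReal_nonneg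
  have hrange : ∀ v ∈ R, ∃ x, sf x = v.1 ∧ sg x = v.2 := by
    intro v hv
    rcases SimpleFunc.mem_range.1 hv with ⟨x, hx⟩
    refine ⟨x, ?_, ?_⟩ <;> rw [← hx] <;> rfl
  -- sh is integrable
  have hf_piece : ∀ a : ℂ, a ≠ 0 → μ (sf ⁻¹' {a}) < ⊤ :=
    (SimpleFunc.memLp_iff hpne ENNReal.ofReal_ne_top).1 hf
  have hsh_int : Integrable sh μ := by
    rw [SimpleFunc.integrable_iff]
    intro v hv0
    by_cases hv : ∃ x, sh x = v
    · obtain ⟨x, hx⟩ := hv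
      have hfx : sf x ≠ 0 := by
        have := hne x 0; simpa using this
      have hv1 : v.1 ≠ 0 := by rw [← hx]; exact hfx
      have hsub : sh ⁻¹' {v} ⊆ sf ⁻¹' {v.1} := by
        intro y hy
        simp only [Set.mem_preimage, Set.mem_singleton_iff] at hy ⊢
        rw [← hy]; rfl
      exact lt_of_le_of_lt (measure_mono hsub) (hf_piece v.1 hv1)
    · have : sh ⁻¹' {v} = ∅ := by
        ext y; simp only [Set.mem_preimage, Set.mem_singleton_iff, Set.mem_empty_iff_false,
          iff_false]
        exact fun h => hv ⟨y, h⟩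
      rw [this]; simp
  -- the quadratic polynomials
  set A : ℂ × ℂ → ℝ := fun v => Complex.normSq v.1 with hAdef
  set Cc : ℂ × ℂ → ℝ := fun v => ((starRingEnd ℂ) v.1 * v.2).re with hCdef
  set B : ℂ × ℂ → ℝ := fun v => Complex.normSq v.2 with hBdef
  set P : ℂ × ℂ → ℝ → ℝ := fun v s => A v + 2*Cc v*s + B v*s^2 with hPdef
  have hPeq : ∀ v s, P v s = Complex.normSq (v.1 + s • v.2) := by
    intro v s; rw [normSq_line]
  have hPpos : ∀ v ∈ R, ∀ s : ℝ, 0 < P v s := by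
    intro v hv s
    obtain ⟨x, h1, h2⟩ := hrange v hv
    rw [hPeq, ← h1, ← h2]
    exact Complex.normSq_pos.2 (hne x s)
  have hB0 : ∀ v, 0 ≤ B v := fun v => Complex.normSq_nonneg _
  have hCS : ∀ v, Cc v ^ 2 ≤ A v * B v := fun v => cs_ineq v.1 v.2
  -- Y and its derivatives
  set Y : ℝ → ℝ := fun s => ∑ v ∈ R, m v * P v s ^ (p/2) with hYdef
  set Y1 : ℝ → ℝ := fun s => ∑ v ∈ R, m v * ((p/2) * P v s ^ (p/2-1) * (2*Cc v + 2*B v*s))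
    with hY1def
  set Y2t : ℝ := ∑ v ∈ R, m v * ((p/2) * ((p/2-1) * P v t ^ (p/2-2) * (2*Cc v + 2*B v*t)^2
    + P v t ^ (p/2-1) * (2*B v))) with hY2def
  have hY : ∀ s : ℝ, HasDerivAt Y (Y1 s) s := by
    intro s
    apply HasDerivAt.fun_sum
    intro v hv
    exact (term_deriv1 p (A v) (Cc v) (B v) s (hPpos v hv s)).const_mul (m v)
  have hY1 : HasDerivAt Y1 Y2t t := by
    apply HasDerivAt.fun_sum
    intro v hv
    exact (term_deriv2 p (A v) (Cc v) (B v) t (hPpos v hv t)).const_mul (m v)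
  -- integral identities
  have hint_Y : ∀ s : ℝ, ∫ x, ‖(⇑sf + s • ⇑sg) x‖ ^ p ∂μ = Y s := by
    intro s
    have := simple_integral_eq μ p hp0 sh hsh_int (⇑sf + s • ⇑sg) (hf.add (hg.const_smul s))
      (fun v => P v s ^ (p/2)) ?_ ?_
    · exact this
    · intro x
      show ‖sf x + s • sg x‖ ^ p = P (sh x) s ^ (p/2)
      rw [hPeq, abs_rpow_eq, hshdef, SimpleFunc.pair_apply]
    · show P 0 s ^ (p/2) = 0
      have h0 : P 0 s = 0 := by simp [hPdef, hAdef, hCdef, hBdef]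
      rw [h0, Real.zero_rpow (by positivity : p/2 ≠ 0)]
  set Ig : ℝ := ∑ v ∈ R, m v * B v ^ (p/2) with hIgdef
  have hint_g : ∫ x, ‖sg x‖ ^ p ∂μ = Ig := by
    apply simple_integral_eq μ p hp0 sh hsh_int (⇑sg) hg
    · intro x
      show ‖sg x‖ ^ p = B (sh x) ^ (p/2)
      rw [abs_rpow_eq]
      rfl
    · show B 0 ^ (p/2) = 0
      have h0 : B 0 = 0 := by simp [hBdef]
      rw [h0, Real.zero_rpow (by positivity : p/2 ≠ 0)]
  have hnp : ∀ s : ℝ, np μ p (⇑sf + s • ⇑sg) ^ 2 = Y s ^ (2/p) := by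
    intro s
    rw [np_sq_eq μ p hp0 _ (hf.add (hg.const_smul s)), hint_Y s]
  have hnpg : np μ p (⇑sg) ^ 2 = Ig ^ (2/p) := by
    rw [np_sq_eq μ p hp0 _ hg, hint_g]
  by_cases hzero : ∀ v ∈ R, m v = 0
  · -- degenerate case
    have hY0 : ∀ s : ℝ, Y s = 0 := fun s =>
      Finset.sum_eq_zero fun v hv => by rw [hzero v hv, zero_mul]
    have hIg0 : Ig = 0 :=
      Finset.sum_eq_zero fun v hv => by rw [hzero v hv, zero_mul]
    have hF : (fun s : ℝ => np μ p (⇑sf + s • ⇑sg) ^ 2) = fun _ => (0:ℝ) := by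
      funext s
      rw [hnp s, hY0 s, Real.zero_rpow hp2ne]
    refine ⟨0, ?_, ?_⟩
    · rw [hF, deriv_const']
      exact hasDerivAt_const t 0
    · rw [hnpg, hIg0, Real.zero_rpow hp2ne]
      simp
  · push_neg at hzero
    obtain ⟨v0, hv0R, hv0⟩ := hzero
    have hYpos : ∀ s : ℝ, 0 < Y s := by
      intro s
      have h1 : 0 < m v0 * P v0 s ^ (p/2) :=
        mul_pos ((hm0 v0).lt_of_ne (Ne.symm hv0)) (Real.rpow_pos_of_pos (hPpos v0 hv0R s) _)
      exact lt_of_lt_of_le h1 (Finset.single_le_sum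
        (fun v hv => mul_nonneg (hm0 v) (Real.rpow_nonneg (hPpos v hv s).le _)) hv0R)
    set φ1 : ℝ → ℝ := fun s => (2/p) * (Y s ^ (2/p-1) * Y1 s) with hφ1def
    have hG : ∀ s : ℝ, HasDerivAt (fun u => Y u ^ (2/p)) (φ1 s) s := by
      intro s
      have h := (hY s).rpow_const (p := 2/p) (Or.inl (hYpos s).ne')
      convert h using 1
      rw [hφ1def]; ring
    have hFG : (fun s : ℝ => np μ p (⇑sf + s • ⇑sg) ^ 2) = fun s => Y s ^ (2/p) :=
      funext fun s => hnp s
    have hderiv : (deriv fun s : ℝ => np μ p (⇑sf + s • ⇑sg) ^ 2) = φ1 := by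
      rw [hFG]; exact funext fun s => (hG s).deriv
    set c : ℝ := (2/p) * (((2/p-1) * Y t ^ (2/p-1-1) * Y1 t) * Y1 t + Y t ^ (2/p-1) * Y2t)
      with hcdef
    have h2a : HasDerivAt (fun s => Y s ^ (2/p-1)) ((2/p-1) * Y t ^ (2/p-1-1) * Y1 t) t := by
      have h := (hY t).rpow_const (p := 2/p-1) (Or.inl (hYpos t).ne')
      convert h using 1; ring
    have h2 : HasDerivAt φ1 c t := by
      have h := (h2a.mul hY1).const_mul (2/p)
      exact h
    refine ⟨c, ?_, ?_⟩
    · rw [hderiv]; exact h2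
    -- the lower bound
    set S : ℝ := ∑ v ∈ R, m v * (P v t ^ (p/2-1) * B v) with hSdef
    have hS0 : 0 ≤ S := Finset.sum_nonneg fun v hv =>
      mul_nonneg (hm0 v) (mul_nonneg (Real.rpow_nonneg (hPpos v hv t).le _) (hB0 v))
    have hY2_lb : p*(p-1) * S ≤ Y2t := by
      rw [hSdef, hY2def, Finset.mul_sum]
      apply Finset.sum_le_sum
      intro v hv
      have h := mul_le_mul_of_nonneg_left
        (term_bound p (A v) (Cc v) (B v) t (hPpos v hv t) (hB0 v) (hCS v) hp hp2) (hm0 v)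
      calc p*(p-1) * (m v * (P v t ^ (p/2-1) * B v))
          = m v * (p*(p-1) * P v t ^ (p/2-1) * B v) := by ring
        _ ≤ _ := h
    have hXnn : 0 ≤ Y t ^ (2/p-1) := Real.rpow_nonneg (hYpos t).le _
    have h2p1 : (0:ℝ) ≤ 2/p - 1 := by
      rw [sub_nonneg, le_div_iff₀ hp0]; linarith
    have hterm1 : 0 ≤ ((2/p-1) * Y t ^ (2/p-1-1) * Y1 t) * Y1 t := by
      have hXnn2 : 0 ≤ Y t ^ (2/p-1-1) := Real.rpow_nonneg (hYpos t).le _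
      calc (0:ℝ) ≤ (2/p-1) * Y t ^ (2/p-1-1) * (Y1 t)^2 := by positivity
        _ = ((2/p-1) * Y t ^ (2/p-1-1) * Y1 t) * Y1 t := by ring
    have hc1 : 2*(p-1) * (Y t ^ (2/p-1) * S) ≤ c := by
      have step1 : Y t ^ (2/p-1) * (p*(p-1)*S) ≤ Y t ^ (2/p-1) * Y2t :=
        mul_le_mul_of_nonneg_left hY2_lb hXnn
      have step2 : (2/p) * (Y t ^ (2/p-1) * (p*(p-1)*S)) ≤ c := by
        rw [hcdef]
        have := mul_le_mul_of_nonneg_left step1 hp20.le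
        nlinarith [hterm1, hp20]
      calc 2*(p-1) * (Y t ^ (2/p-1) * S) = (2/p) * (Y t ^ (2/p-1) * (p*(p-1)*S)) := by
            field_simp
        _ ≤ c := step2
    have hIg_nonneg : 0 ≤ Ig := Finset.sum_nonneg fun v hv =>
      mul_nonneg (hm0 v) (Real.rpow_nonneg (hB0 v) _)
    -- Hölder: Ig ^ (2/p) ≤ Y t ^ (2/p-1) * S
    have hholder : Ig ^ (2/p) ≤ Y t ^ (2/p-1) * S := by
      by_cases hSz : S = 0
      · have hxz : ∀ v ∈ R, m v * (P v t ^ (p/2-1) * B v) = 0 := by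
          intro v hv
          have := (Finset.sum_eq_zero_iff_of_nonneg fun v hv =>
            mul_nonneg (hm0 v) (mul_nonneg (Real.rpow_nonneg (hPpos v hv t).le _) (hB0 v))).1
            (hSdef ▸ hSz) v hv
          exact this
        have hIg0 : Ig = 0 := by
          apply Finset.sum_eq_zero
          intro v hv
          have hx := hxz v hv
          have hPt : P v t ^ (p/2-1) ≠ 0 := (Real.rpow_pos_of_pos (hPpos v hv t) _).ne'
          rcases mul_eq_zero.1 hx with h | h
          · rw [h, zero_mul]
          · rcases mul_eq_zero.1 h with h' | h'
            · exact absurd h' hPt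
            · rw [h', Real.zero_rpow (by positivity : p/2 ≠ 0), mul_zero]
        rw [hIg0, Real.zero_rpow hp2ne, hSz, mul_zero]
      · have hSpos : 0 < S := hS0.lt_of_ne (Ne.symm hSz)
        -- per-term identity
        have hterm : ∀ v ∈ R, m v * B v ^ (p/2) =
            (m v * (P v t ^ (p/2-1) * B v)) ^ (p/2) * (m v * P v t ^ (p/2)) ^ (1-p/2) := by
          intro v hv
          have hP := hPpos v hv t
          by_cases hmv : m v = 0
          · rw [hmv]; simp [Real.zero_rpow (by positivity : p/2 ≠ 0)]
          · have hmpos : 0 < m v := (hm0 v).lt_of_ne (Ne.symm hmv)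
            by_cases hBv : B v = 0
            · rw [hBv]
              simp [Real.zero_rpow (by positivity : p/2 ≠ 0)]
            · have hBpos : 0 < B v := (hB0 v).lt_of_ne (Ne.symm hBv)
              have e1 : (m v * (P v t ^ (p/2-1) * B v)) ^ (p/2)
                  = m v ^ (p/2) * (P v t ^ ((p/2-1)*(p/2)) * B v ^ (p/2)) := by
                rw [Real.mul_rpow hmpos.le (mul_nonneg (Real.rpow_nonneg hP.le _) hBpos.le),
                  Real.mul_rpow (Real.rpow_nonneg hP.le _) hBpos.le,
                  ← Real.rpow_mul hP.le]
              have e2 : (m v * P v t ^ (p/2)) ^ (1-p/2)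
                  = m v ^ (1-p/2) * P v t ^ ((p/2)*(1-p/2)) := by
                rw [Real.mul_rpow hmpos.le (Real.rpow_nonneg hP.le _),
                  ← Real.rpow_mul hP.le]
              rw [e1, e2]
              have e3 : m v ^ (p/2) * m v ^ (1-p/2) = m v := by
                rw [← Real.rpow_add hmpos]; norm_num
              have e4 : P v t ^ ((p/2-1)*(p/2)) * P v t ^ ((p/2)*(1-p/2)) = 1 := by
                rw [← Real.rpow_add hP, show (p/2-1)*(p/2)+(p/2)*(1-p/2) = 0 by ring,
                  Real.rpow_zero]
              calc m v * B v ^ (p/2)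
                  = (m v ^ (p/2) * m v ^ (1-p/2)) *
                    (P v t ^ ((p/2-1)*(p/2)) * P v t ^ ((p/2)*(1-p/2))) * B v ^ (p/2) := by
                    rw [e3, e4]; ring
                _ = m v ^ (p/2) * (P v t ^ ((p/2-1)*(p/2)) * B v ^ (p/2)) *
                    (m v ^ (1-p/2) * P v t ^ ((p/2)*(1-p/2))) := by ring
        have hIg_le : Ig ≤ S ^ (p/2) * Y t ^ (1-p/2) := by
          rw [hIgdef]
          calc ∑ v ∈ R, m v * B v ^ (p/2)
              = ∑ v ∈ R, (m v * (P v t ^ (p/2-1) * B v)) ^ (p/2) *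
                (m v * P v t ^ (p/2)) ^ (1-p/2) := Finset.sum_congr rfl hterm
            _ ≤ S ^ (p/2) * Y t ^ (1-p/2) := by
                apply holder_sum R _ _ (p/2) (by positivity) (by linarith)
                · intro v hv
                  exact mul_nonneg (hm0 v)
                    (mul_nonneg (Real.rpow_nonneg (hPpos v hv t).le _) (hB0 v))
                · intro v hv
                  exact mul_nonneg (hm0 v) (Real.rpow_nonneg (hPpos v hv t).le _)
                · exact hSpos
                · exact hYpos t
        calc Ig ^ (2/p) ≤ (S ^ (p/2) * Y t ^ (1-p/2)) ^ (2/p) :=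
              Real.rpow_le_rpow hIg_nonneg hIg_le hp20.le
          _ = S ^ ((p/2)*(2/p)) * Y t ^ ((1-p/2)*(2/p)) := by
              rw [Real.mul_rpow (Real.rpow_nonneg hSpos.le _)
                (Real.rpow_nonneg (hYpos t).le _), ← Real.rpow_mul hSpos.le,
                ← Real.rpow_mul (hYpos t).le]
          _ = Y t ^ (2/p-1) * S := by
              rw [show (p/2)*(2/p) = 1 by field_simp, show (1-p/2)*(2/p) = 2/p-1 by field_simp, Real.rpow_one]
              ring
    calc 2 * (p - 1) * np μ p (⇑sg) ^ 2 = 2*(p-1) * Ig ^ (2/p) := by rw [hnpg]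
      _ ≤ 2*(p-1) * (Y t ^ (2/p-1) * S) := by
          apply mul_le_mul_of_nonneg_left hholder; linarith
      _ ≤ c := hc1
end
end

section
/- Let 2 < p < ∞ and E(f) = ‖f‖_p² on L^p(Ω,μ). Then for all f₁, f₂ ∈ L^p: E(f₂) ≥ E(f₁) + ⟨f₂-f₁, ∇E(f₁)⟩ + (1/(4p))(2/3)^{p-1}(‖f₁‖_p + ‖f₂‖_p)^{2-p} ‖f₂-f₁‖_p^p, where ⟨f,g⟩ = 2Re∫f*g dμ. -/
open MeasureTheory

noncomputable section

set_option maxHeartbeats 1600000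

section Helpers
open Complex
open scoped NNReal ENNReal

/-- auxiliary function `|f|^{p-2} f` -/
def vvX {Ω : Type*} (p : ℝ) (f : Ω → ℂ) : Ω → ℂ := fun x => (‖f x‖ ^ (p - 2) : ℝ) • f x

lemma bernX {p t : ℝ} (hp : 1 ≤ p) (ht1 : t ≤ 1) :
    (1 - t) ^ (1 / p) ≤ 1 - t / p := by
  have hp0 : (0:ℝ) < p := lt_of_lt_of_le one_pos hp
  have htp : t / p ≤ 1 := by
    rw [div_le_one hp0]; linarith
  have h1 : 1 - t ≤ (1 - t / p) ^ p := by
    have h := one_add_mul_self_le_rpow_one_add (s := -(t / p)) (by linarith) hp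
    have hpt : p * (t / p) = t := by field_simp
    rw [← sub_eq_add_neg] at h
    calc 1 - t = 1 + p * (-(t/p)) := by rw [mul_neg, hpt]; ring
      _ ≤ (1 - t/p) ^ p := h
  calc (1 - t) ^ (1/p) ≤ ((1 - t/p) ^ p) ^ (1/p) :=
        Real.rpow_le_rpow (by linarith) h1 (by positivity)
    _ = 1 - t / p := by
        rw [← Real.rpow_mul (by linarith), mul_one_div_cancel hp0.ne', Real.rpow_one]

lemma clarkson_nnX {p : ℝ} (hp : 2 ≤ p) (z w : ℂ) :
    ‖z + w‖₊ ^ p + ‖z - w‖₊ ^ p ≤ (2:ℝ≥0) ^ (p - 1) * (‖z‖₊ ^ p + ‖w‖₊ ^ p) := by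
  have hs : (1:ℝ) ≤ p / 2 := by linarith
  have hpar : ‖z + w‖₊ ^ (2:ℝ) + ‖z - w‖₊ ^ (2:ℝ)
      = 2 * (‖z‖₊ ^ (2:ℝ) + ‖w‖₊ ^ (2:ℝ)) := by
    have h := parallelogram_law_with_norm ℂ z w
    apply NNReal.coe_injective
    push_cast [NNReal.coe_rpow, Real.rpow_two]
    simpa [pow_two] using h
  have key : ∀ a : ℝ≥0, a ^ p = (a ^ (2:ℝ)) ^ (p/2) := by
    intro a
    rw [← NNReal.rpow_mul]
    congr 1
    ring
  have e : p/2 + (p/2 - 1) = p - 1 := by ring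
  calc ‖z + w‖₊ ^ p + ‖z - w‖₊ ^ p
      = (‖z + w‖₊ ^ (2:ℝ)) ^ (p/2) + (‖z - w‖₊ ^ (2:ℝ)) ^ (p/2) := by rw [key, key]
    _ ≤ ((‖z + w‖₊ ^ (2:ℝ)) + (‖z - w‖₊ ^ (2:ℝ))) ^ (p/2) :=
        NNReal.add_rpow_le_rpow_add _ _ hs
    _ = (2 * (‖z‖₊ ^ (2:ℝ) + ‖w‖₊ ^ (2:ℝ))) ^ (p/2) := by rw [hpar]
    _ = 2 ^ (p/2) * ((‖z‖₊ ^ (2:ℝ) + ‖w‖₊ ^ (2:ℝ))) ^ (p/2) := by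
        rw [NNReal.mul_rpow]
    _ ≤ 2 ^ (p/2) * ((2:ℝ≥0) ^ (p/2 - 1) * ((‖z‖₊ ^ (2:ℝ)) ^ (p/2) + (‖w‖₊ ^ (2:ℝ)) ^ (p/2))) := by
        gcongr
        exact NNReal.rpow_add_le_mul_rpow_add_rpow _ _ hs
    _ = (2:ℝ≥0) ^ (p - 1) * (‖z‖₊ ^ p + ‖w‖₊ ^ p) := by
        rw [← mul_assoc, ← NNReal.rpow_add (by norm_num), e, ← key, ← key]

lemma clarkson_pointX {p : ℝ} (hp : 2 ≤ p) (z w : ℂ) :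
    ‖z + w‖ ^ p + ‖z - w‖ ^ p ≤ 2 ^ (p - 1) * (‖z‖ ^ p + ‖w‖ ^ p) := by
  have h := NNReal.coe_le_coe.2 (clarkson_nnX hp z w)
  push_cast [NNReal.coe_rpow, coe_nnnorm] at h
  simpa using h

lemma stepDX {p B JM JN : ℝ} (hp : 2 < p) (hB : 0 < B) (hJM : 0 ≤ JM) (hJN : 0 ≤ JN)
    (h : JM + JN ≤ 2 ^ p * B ^ p) :
    JM ^ (1/p) ≤ 2 * B - JN / (p * 2 ^ (p-1) * B ^ (p-1)) := by
  have hp0 : (0:ℝ) < p := by linarith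
  have h2p : (0:ℝ) < 2 ^ p * B ^ p := by positivity
  set t : ℝ := JN / (2 ^ p * B ^ p) with ht
  have ht0 : 0 ≤ t := by positivity
  have ht1 : t ≤ 1 := by
    rw [ht, div_le_one h2p]; linarith
  have h1 : JM ≤ 2 ^ p * B ^ p * (1 - t) := by
    have : 2 ^ p * B ^ p * t = JN := by
      rw [ht]; field_simp
    nlinarith
  have h2 : JM ^ (1/p) ≤ 2 * B * (1 - t) ^ (1/p) := by
    calc JM ^ (1/p) ≤ (2 ^ p * B ^ p * (1 - t)) ^ (1/p) :=
          Real.rpow_le_rpow hJM h1 (by positivity)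
      _ = (2 ^ p) ^ (1/p) * (B ^ p) ^ (1/p) * (1 - t) ^ (1/p) := by
          rw [Real.mul_rpow (by positivity) (by linarith),
            Real.mul_rpow (by positivity) (by positivity)]
      _ = 2 * B * (1 - t) ^ (1/p) := by
          rw [← Real.rpow_mul (by norm_num), ← Real.rpow_mul hB.le,
            mul_one_div_cancel hp0.ne', Real.rpow_one, Real.rpow_one]
  have h3 : 2 * B * (1 - t) ^ (1/p) ≤ 2 * B * (1 - t / p) :=
    mul_le_mul_of_nonneg_left (bernX (by linarith) ht1) (by linarith)
  have h4 : 2 * B * (1 - t / p) = 2 * B - JN / (p * 2 ^ (p-1) * B ^ (p-1)) := by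
    have e2 : (2:ℝ) ^ p = 2 * 2 ^ (p - 1) := by
      rw [show p = 1 + (p-1) by ring, Real.rpow_add (by norm_num), Real.rpow_one]
      ring_nf
    have eB : B ^ p = B * B ^ (p - 1) := by
      rw [show p = 1 + (p-1) by ring, Real.rpow_add hB, Real.rpow_one]
      ring_nf
    have hb1 : (0:ℝ) < 2 ^ (p-1) := by positivity
    have hb2 : (0:ℝ) < B ^ (p-1) := by positivity
    rw [ht]
    rw [e2, eB]
    field_simp
  linarith

lemma key_scalarX {p A B δ s : ℝ} (hp : 2 < p) (hA : 0 < A) (hB : 0 < B)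
    (hδ0 : 0 ≤ δ) (hs0 : 0 ≤ s)
    (hδ1 : δ ≤ s + |B - A|) (hδ2 : δ ≤ A / B * s + |B - A|) (hδ3 : δ ≤ A + B) :
    1 / (4*p) * (2/3) ^ (p-1) * (A+B) ^ (2-p) * δ ^ p
      ≤ (B - A) ^ 2 + 2 * A / (p * 2 ^ (p-1) * B ^ (p-1)) * s ^ p := by
  have hp0 : (0:ℝ) < p := by linarith
  have hAB : (0:ℝ) < A + B := by linarith
  have hABp : (0:ℝ) < (A+B) ^ (2-p) := Real.rpow_pos_of_pos hAB _
  have h23 : (0:ℝ) < (2/3:ℝ) ^ (p-1) := by positivity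
  have h2p : (0:ℝ) < (2:ℝ) ^ (p-1) := by positivity
  have hBp : (0:ℝ) < B ^ (p-1) := Real.rpow_pos_of_pos hB _
  have hAp : (0:ℝ) < A ^ (p-1) := Real.rpow_pos_of_pos hA _
  have hsp : (0:ℝ) ≤ s ^ p := Real.rpow_nonneg hs0 _
  have hδp : (0:ℝ) ≤ δ ^ p := Real.rpow_nonneg hδ0 _
  have hUT : (A+B) ^ (p-1) * (A+B) ^ (2-p) = A + B := by
    rw [← Real.rpow_add hAB]
    norm_num
  by_cases hcase : δ / 3 ≤ |B - A|
  · have c1 : (2/3:ℝ) ^ (p-1) ≤ 2/3 := by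
      have := Real.rpow_le_rpow_of_exponent_ge (x := (2/3:ℝ)) (by norm_num) (by norm_num)
        (show (1:ℝ) ≤ p - 1 by linarith)
      simpa using this
    have hd1 : (A+B) ^ (2-p) * δ ^ p ≤ δ ^ 2 := by
      have e : δ ^ p = δ ^ (2:ℝ) * δ ^ (p-2) := by
        rw [← Real.rpow_add' hδ0 (by intro hc; linarith)]
        ring_nf
      have hd2 : δ ^ (p-2) ≤ (A+B) ^ (p-2) := Real.rpow_le_rpow hδ0 hδ3 (by linarith)
      have hprod : (A+B) ^ (2-p) * (A+B) ^ (p-2) = 1 := by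
        rw [← Real.rpow_add hAB]; norm_num
      calc (A+B) ^ (2-p) * δ ^ p = δ ^ (2:ℝ) * ((A+B) ^ (2-p) * δ ^ (p-2)) := by
            rw [e]; ring
        _ ≤ δ ^ (2:ℝ) * ((A+B) ^ (2-p) * (A+B) ^ (p-2)) := by
            have : (0:ℝ) ≤ δ ^ (2:ℝ) := Real.rpow_nonneg hδ0 _
            gcongr
        _ = δ ^ 2 := by rw [hprod, Real.rpow_two]; ring
    have hsq : δ ^ 2 ≤ 9 * (B - A) ^ 2 := by
      have h1 : δ ≤ 3 * |B - A| := by linarith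
      have := abs_nonneg (B - A)
      nlinarith [_root_.sq_abs (B - A)]
    have hcoef : 1 / (4*p) * (2/3:ℝ) ^ (p-1) ≤ 1/12 := by
      have h1 : 1 / (4*p) ≤ 1/8 := by
        rw [div_le_div_iff₀ (by linarith) (by norm_num)]; linarith
      nlinarith
    have hterm : (0:ℝ) ≤ 2 * A / (p * 2 ^ (p-1) * B ^ (p-1)) * s ^ p := by positivity
    calc 1 / (4*p) * (2/3) ^ (p-1) * (A+B) ^ (2-p) * δ ^ p
        = (1 / (4*p) * (2/3) ^ (p-1)) * ((A+B) ^ (2-p) * δ ^ p) := by ring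
      _ ≤ 1/12 * δ ^ 2 := mul_le_mul hcoef hd1 (by positivity) (by norm_num)
      _ ≤ (B - A) ^ 2 := by nlinarith
      _ ≤ _ := by linarith
  · push_neg at hcase
    have habs : (0:ℝ) ≤ |B - A| := abs_nonneg _
    have hX : (2/3:ℝ) ^ p = (2/3) * (2/3:ℝ) ^ (p-1) := by
      rw [show p = 1 + (p-1) by ring, Real.rpow_add (by norm_num), Real.rpow_one]
      ring_nf
    have main : 1 / (4*p) * (2/3) ^ (p-1) * (A+B) ^ (2-p) * δ ^ p
        ≤ 2 * A / (p * 2 ^ (p-1) * B ^ (p-1)) * s ^ p := by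
      rcases le_total A B with hABle | hABle
      · have hs1 : 2/3 * δ * (B / A) ≤ s := by
          have h1 : 2/3 * δ ≤ A / B * s := by linarith
          calc 2/3 * δ * (B/A) ≤ (A/B * s) * (B/A) :=
                mul_le_mul_of_nonneg_right h1 (by positivity)
            _ = s := by field_simp
        have hsp' : (2/3 * δ * (B/A)) ^ p ≤ s ^ p :=
          Real.rpow_le_rpow (by positivity) hs1 hp0.le
        have hexp : (2/3 * δ * (B/A)) ^ p = (2/3) * (2/3:ℝ)^(p-1) * δ^p * ((B/A)^p) := by
          rw [Real.mul_rpow (by positivity) (by positivity),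
            Real.mul_rpow (by positivity) hδ0, hX]
        have hCBA : 2 * A / (p * 2 ^ (p-1) * B ^ (p-1)) * (B/A) ^ p
            = 2 * B / (p * 2 ^ (p-1) * A ^ (p-1)) := by
          rw [Real.div_rpow hB.le hA.le,
            show p = 1 + (p-1) by ring, Real.rpow_add hB, Real.rpow_add hA,
            Real.rpow_one]
          field_simp
          simp only [Real.rpow_one]; ring
        have hA2 : 2 ^ (p-1) * A ^ (p-1) ≤ (A+B) ^ (p-1) := by
          have h1 : A ^ (p-1) ≤ ((A+B)/2) ^ (p-1) :=
            Real.rpow_le_rpow hA.le (by linarith) (by linarith)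
          have h2 : ((A+B)/2) ^ (p-1) = (A+B) ^ (p-1) / 2 ^ (p-1) :=
            Real.div_rpow hAB.le (by norm_num) _
          rw [h2] at h1
          calc 2 ^ (p-1) * A ^ (p-1) ≤ 2 ^ (p-1) * ((A+B) ^ (p-1) / 2 ^ (p-1)) := by
                gcongr
            _ = (A+B) ^ (p-1) := by field_simp
        have hDT : (2 ^ (p-1) * A ^ (p-1)) * (A+B) ^ (2-p) ≤ 2 * B := by
          calc (2 ^ (p-1) * A ^ (p-1)) * (A+B) ^ (2-p)
              ≤ (A+B) ^ (p-1) * (A+B) ^ (2-p) :=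
                mul_le_mul_of_nonneg_right hA2 hABp.le
            _ = A + B := hUT
            _ ≤ 2 * B := by linarith
        have hcoef : 1 / (4*p) * (A+B) ^ (2-p)
            ≤ 2 * B / (p * 2 ^ (p-1) * A ^ (p-1)) * (2/3) := by
          rw [show 1 / (4*p) * (A+B) ^ (2-p) = (A+B) ^ (2-p) / (4*p) by ring,
            show 2 * B / (p * 2 ^ (p-1) * A ^ (p-1)) * (2/3)
              = 4 * B / (3 * (p * (2 ^ (p-1) * A ^ (p-1)))) by ring,
            div_le_div_iff₀ (by positivity) (by positivity)]
          nlinarith [mul_le_mul_of_nonneg_left hDT hp0.le]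
        calc 1 / (4*p) * (2/3) ^ (p-1) * (A+B) ^ (2-p) * δ ^ p
            = (1 / (4*p) * (A+B) ^ (2-p)) * ((2/3:ℝ)^(p-1) * δ^p) := by ring
          _ ≤ (2 * B / (p * 2 ^ (p-1) * A ^ (p-1)) * (2/3)) * ((2/3:ℝ)^(p-1) * δ^p) :=
              mul_le_mul_of_nonneg_right hcoef (by positivity)
          _ = 2 * A / (p * 2 ^ (p-1) * B ^ (p-1)) * ((2/3) * (2/3:ℝ)^(p-1) * δ^p * ((B/A)^p)) := by
              rw [← hCBA]; ring
          _ = 2 * A / (p * 2 ^ (p-1) * B ^ (p-1)) * ((2/3 * δ * (B/A)) ^ p) := by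
              rw [hexp]
          _ ≤ 2 * A / (p * 2 ^ (p-1) * B ^ (p-1)) * s ^ p :=
              mul_le_mul_of_nonneg_left hsp' (by positivity)
      · have hs1 : 2/3 * δ ≤ s := by linarith
        have hsp' : (2/3 * δ) ^ p ≤ s ^ p :=
          Real.rpow_le_rpow (by positivity) hs1 hp0.le
        have hexp : (2/3 * δ) ^ p = (2/3) * (2/3:ℝ)^(p-1) * δ^p := by
          rw [Real.mul_rpow (by positivity) hδ0, hX]
        have hB2 : 2 ^ (p-1) * B ^ (p-1) ≤ (A+B) ^ (p-1) := by
          have h1 : B ^ (p-1) ≤ ((A+B)/2) ^ (p-1) :=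
            Real.rpow_le_rpow hB.le (by linarith) (by linarith)
          have h2 : ((A+B)/2) ^ (p-1) = (A+B) ^ (p-1) / 2 ^ (p-1) :=
            Real.div_rpow hAB.le (by norm_num) _
          rw [h2] at h1
          calc 2 ^ (p-1) * B ^ (p-1) ≤ 2 ^ (p-1) * ((A+B) ^ (p-1) / 2 ^ (p-1)) := by
                gcongr
            _ = (A+B) ^ (p-1) := by field_simp
        have hDT : (2 ^ (p-1) * B ^ (p-1)) * (A+B) ^ (2-p) ≤ 2 * A := by
          calc (2 ^ (p-1) * B ^ (p-1)) * (A+B) ^ (2-p)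
              ≤ (A+B) ^ (p-1) * (A+B) ^ (2-p) :=
                mul_le_mul_of_nonneg_right hB2 hABp.le
            _ = A + B := hUT
            _ ≤ 2 * A := by linarith
        have hcoef : 1 / (4*p) * (A+B) ^ (2-p)
            ≤ 2 * A / (p * 2 ^ (p-1) * B ^ (p-1)) * (2/3) := by
          rw [show 1 / (4*p) * (A+B) ^ (2-p) = (A+B) ^ (2-p) / (4*p) by ring,
            show 2 * A / (p * 2 ^ (p-1) * B ^ (p-1)) * (2/3)
              = 4 * A / (3 * (p * (2 ^ (p-1) * B ^ (p-1)))) by ring,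
            div_le_div_iff₀ (by positivity) (by positivity)]
          nlinarith [mul_le_mul_of_nonneg_left hDT hp0.le]
        calc 1 / (4*p) * (2/3) ^ (p-1) * (A+B) ^ (2-p) * δ ^ p
            = (1 / (4*p) * (A+B) ^ (2-p)) * ((2/3:ℝ)^(p-1) * δ^p) := by ring
          _ ≤ (2 * A / (p * 2 ^ (p-1) * B ^ (p-1)) * (2/3)) * ((2/3:ℝ)^(p-1) * δ^p) :=
              mul_le_mul_of_nonneg_right hcoef (by positivity)
          _ = 2 * A / (p * 2 ^ (p-1) * B ^ (p-1)) * ((2/3 * δ) ^ p) := by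
              rw [hexp]; ring
          _ ≤ 2 * A / (p * 2 ^ (p-1) * B ^ (p-1)) * s ^ p :=
              mul_le_mul_of_nonneg_left hsp' (by positivity)
    nlinarith [sq_nonneg (B - A)]

variable {Ω : Type*} [MeasurableSpace Ω] {μ : Measure Ω} {p : ℝ}

lemma np_nonnegX (f : Ω → ℂ) : 0 ≤ np μ p f := ENNReal.toReal_nonneg

lemma np_eqX (hp : 0 < p) {f : Ω → ℂ} (hf : MemLp f (ENNReal.ofReal p) μ) :
    np μ p f = (∫ x, ‖f x‖ ^ p ∂μ) ^ (1/p) := by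
  have h0 : ENNReal.ofReal p ≠ 0 := by
    simp [ENNReal.ofReal_eq_zero, not_le, hp]
  have hI : (0:ℝ) ≤ ∫ x, ‖f x‖ ^ (ENNReal.ofReal p).toReal ∂μ :=
    integral_nonneg fun x => Real.rpow_nonneg (norm_nonneg _) _
  rw [np, hf.eLpNorm_eq_integral_rpow_norm h0 ENNReal.ofReal_ne_top,
    ENNReal.toReal_ofReal (Real.rpow_nonneg hI _)]
  rw [ENNReal.toReal_ofReal hp.le, one_div]

lemma np_rpowX (hp : 0 < p) {f : Ω → ℂ} (hf : MemLp f (ENNReal.ofReal p) μ) :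
    (np μ p f) ^ p = ∫ x, ‖f x‖ ^ p ∂μ := by
  have hI : (0:ℝ) ≤ ∫ x, ‖f x‖ ^ p ∂μ :=
    integral_nonneg fun x => Real.rpow_nonneg (norm_nonneg _) _
  rw [np_eqX hp hf, ← Real.rpow_mul hI, one_div, inv_mul_cancel₀ hp.ne', Real.rpow_one]

lemma np_smulX (c : ℝ) (f : Ω → ℂ) : np μ p (fun x => c • f x) = |c| * np μ p f := by
  rw [np, np, show (fun x => c • f x) = c • f from rfl, eLpNorm_const_smul]
  rw [ENNReal.toReal_mul]
  simp [Real.norm_eq_abs]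

lemma np_congrX {f g : Ω → ℂ} (h : f =ᵐ[μ] g) : np μ p f = np μ p g := by
  rw [np, np, eLpNorm_congr_ae h]

lemma np_add_leX (hp : 1 ≤ p) {f g : Ω → ℂ} (hf : MemLp f (ENNReal.ofReal p) μ)
    (hg : MemLp g (ENNReal.ofReal p) μ) :
    np μ p (fun x => f x + g x) ≤ np μ p f + np μ p g := by
  have h1 : (1:ℝ≥0∞) ≤ ENNReal.ofReal p := by
    rw [← ENNReal.ofReal_one]
    exact ENNReal.ofReal_le_ofReal hp
  have h := eLpNorm_add_le hf.aestronglyMeasurable hg.aestronglyMeasurable h1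
  have hfin : eLpNorm f (ENNReal.ofReal p) μ + eLpNorm g (ENNReal.ofReal p) μ ≠ ∞ :=
    ENNReal.add_ne_top.2 ⟨hf.eLpNorm_ne_top, hg.eLpNorm_ne_top⟩
  calc np μ p (fun x => f x + g x) = (eLpNorm (f + g) (ENNReal.ofReal p) μ).toReal := rfl
    _ ≤ (eLpNorm f (ENNReal.ofReal p) μ + eLpNorm g (ENNReal.ofReal p) μ).toReal :=
        ENNReal.toReal_mono hfin h
    _ = np μ p f + np μ p g := ENNReal.toReal_add hf.eLpNorm_ne_top hg.eLpNorm_ne_top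

lemma vv_normX (hp : 2 < p) (f : Ω → ℂ) (x : Ω) : ‖vvX p f x‖ = ‖f x‖ ^ (p - 1) := by
  rw [vvX, norm_smul, Real.norm_eq_abs,
    _root_.abs_of_nonneg (Real.rpow_nonneg (norm_nonneg _) _)]
  rw [show p - 1 = (p-2) + 1 by ring, Real.rpow_add' (norm_nonneg _) (by intro h; linarith),
    Real.rpow_one]

lemma vv_aesmX (hp : 2 < p) {f : Ω → ℂ} (hf : AEStronglyMeasurable f μ) :
    AEStronglyMeasurable (vvX p f) μ := by
  exact ((Real.continuous_rpow_const (by linarith : (0:ℝ) ≤ p - 2)).comp_aestronglyMeasurable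
    hf.norm).smul hf

lemma vv_memLpX (hp : 2 < p) {f : Ω → ℂ} (hf : MemLp f (ENNReal.ofReal p) μ) :
    MemLp (vvX p f) (ENNReal.ofReal (p / (p-1))) μ := by
  refine ⟨vv_aesmX hp hf.aestronglyMeasurable, ?_⟩
  have h1 : eLpNorm (vvX p f) (ENNReal.ofReal (p / (p-1))) μ
      = eLpNorm (fun x => ‖f x‖ ^ (p-1)) (ENNReal.ofReal (p / (p-1))) μ := by
    apply eLpNorm_congr_norm_ae
    filter_upwards with x
    rw [vv_normX hp, Real.norm_eq_abs,
      _root_.abs_of_nonneg (Real.rpow_nonneg (norm_nonneg _) _)]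
  rw [h1, eLpNorm_norm_rpow f (by linarith : (0:ℝ) < p - 1)]
  have h2 : ENNReal.ofReal (p / (p-1)) * ENNReal.ofReal (p-1) = ENNReal.ofReal p := by
    rw [← ENNReal.ofReal_mul (le_of_lt (div_pos (by linarith) (by linarith)))]
    congr 1
    rw [div_mul_eq_mul_div, mul_div_assoc, div_self (by intro h; linarith : p - 1 ≠ 0), mul_one]
  rw [h2]
  exact ENNReal.rpow_lt_top_of_nonneg (by linarith) hf.eLpNorm_ne_top

lemma memLp_conjX {P : ℝ≥0∞} {f : Ω → ℂ} (hf : MemLp f P μ) :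
    MemLp (fun x => (starRingEnd ℂ) (f x)) P μ := by
  refine ⟨Complex.continuous_conj.comp_aestronglyMeasurable hf.aestronglyMeasurable, ?_⟩
  have h1 : eLpNorm (fun x => (starRingEnd ℂ) (f x)) P μ = eLpNorm f P μ := by
    apply eLpNorm_congr_norm_ae
    filter_upwards with x
    simp
  rw [h1]; exact hf.2

lemma integrable_conj_mulX (hp : 1 < p) {f g : Ω → ℂ}
    (hf : MemLp f (ENNReal.ofReal p) μ) (hg : MemLp g (ENNReal.ofReal (p/(p-1))) μ) :
    Integrable (fun x => (starRingEnd ℂ) (f x) * g x) μ := by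
  have hpq : p.HolderConjugate (p/(p-1)) := Real.HolderConjugate.conjExponent hp
  haveI : ENNReal.HolderTriple (ENNReal.ofReal p) (ENNReal.ofReal (p/(p-1))) 1 :=
    ⟨by simpa using hpq.inv_add_inv_ennreal⟩
  have h2 := hg.smul (r := 1) (memLp_conjX hf)
  rw [memLp_one_iff_integrable] at h2
  exact h2

lemma intg_norm_rpowX (hp : 0 < p) {f : Ω → ℂ} (hf : MemLp f (ENNReal.ofReal p) μ) :
    Integrable (fun x => ‖f x‖ ^ p) μ := by
  have h := hf.integrable_norm_rpow (by simp [ENNReal.ofReal_eq_zero, not_le, hp])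
    ENNReal.ofReal_ne_top
  rwa [ENNReal.toReal_ofReal hp.le] at h

lemma clarkson_intX (hp : 2 < p) {u w : Ω → ℂ}
    (hu : MemLp u (ENNReal.ofReal p) μ) (hw : MemLp w (ENNReal.ofReal p) μ) :
    (∫ x, ‖u x + w x‖ ^ p ∂μ) + ∫ x, ‖u x - w x‖ ^ p ∂μ
      ≤ 2 ^ (p-1) * ((∫ x, ‖u x‖ ^ p ∂μ) + ∫ x, ‖w x‖ ^ p ∂μ) := by
  have hp0 : (0:ℝ) < p := by linarith
  have iu := intg_norm_rpowX hp0 hu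
  have iw := intg_norm_rpowX hp0 hw
  have iuw : Integrable (fun x => ‖u x + w x‖ ^ p) μ := intg_norm_rpowX hp0 (hu.add hw)
  have iuw' : Integrable (fun x => ‖u x - w x‖ ^ p) μ := intg_norm_rpowX hp0 (hu.sub hw)
  calc (∫ x, ‖u x + w x‖ ^ p ∂μ) + ∫ x, ‖u x - w x‖ ^ p ∂μ
      = ∫ x, (‖u x + w x‖ ^ p + ‖u x - w x‖ ^ p) ∂μ := (integral_add iuw iuw').symm
    _ ≤ ∫ x, 2 ^ (p-1) * (‖u x‖ ^ p + ‖w x‖ ^ p) ∂μ := by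
        apply integral_mono (iuw.add iuw') (((iu.add iw)).const_mul _)
        intro x
        exact clarkson_pointX hp.le (u x) (w x)
    _ = 2 ^ (p-1) * ((∫ x, ‖u x‖ ^ p ∂μ) + ∫ x, ‖w x‖ ^ p ∂μ) := by
        rw [integral_const_mul, integral_add iu iw]

lemma holder_boundX (hp : 2 < p) {f₁ M : Ω → ℂ} (h1 : MemLp f₁ (ENNReal.ofReal p) μ)
    (hM : MemLp M (ENNReal.ofReal p) μ) :
    (∫ x, (starRingEnd ℂ) (M x) * vvX p f₁ x ∂μ).re ≤ np μ p M * (np μ p f₁) ^ (p-1) := by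
  have hp0 : (0:ℝ) < p := by linarith
  have hp1 : (1:ℝ) < p := by linarith
  have hpq : p.HolderConjugate (p/(p-1)) := Real.HolderConjugate.conjExponent hp1
  have hvv := vv_memLpX hp h1
  have step1 : (∫ x, (starRingEnd ℂ) (M x) * vvX p f₁ x ∂μ).re
      ≤ ∫ x, ‖M x‖ * ‖vvX p f₁ x‖ ∂μ := by
    calc (∫ x, (starRingEnd ℂ) (M x) * vvX p f₁ x ∂μ).re
        ≤ ‖∫ x, (starRingEnd ℂ) (M x) * vvX p f₁ x ∂μ‖ := by
          simpa using RCLike.re_le_norm (K := ℂ) _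
      _ ≤ ∫ x, ‖(starRingEnd ℂ) (M x) * vvX p f₁ x‖ ∂μ := norm_integral_le_integral_norm _
      _ = ∫ x, ‖M x‖ * ‖vvX p f₁ x‖ ∂μ := by
          congr 1; funext x; rw [norm_mul, RCLike.norm_conj]
  have step2 : ∫ x, ‖M x‖ * ‖vvX p f₁ x‖ ∂μ
      ≤ (∫ x, ‖M x‖ ^ p ∂μ) ^ (1/p) * (∫ x, ‖vvX p f₁ x‖ ^ (p/(p-1)) ∂μ) ^ (1/(p/(p-1))) :=
    integral_mul_norm_le_Lp_mul_Lq hpq hM hvv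
  have e1 : ∫ x, ‖vvX p f₁ x‖ ^ (p/(p-1)) ∂μ = ∫ x, ‖f₁ x‖ ^ p ∂μ := by
    congr 1; funext x
    rw [vv_normX hp, ← Real.rpow_mul (norm_nonneg _)]
    congr 1
    have hne : p - 1 ≠ 0 := by intro h; linarith
    field_simp
  have e2 : ((np μ p f₁) ^ p) ^ (1/(p/(p-1))) = (np μ p f₁) ^ (p-1) := by
    rw [← Real.rpow_mul (np_nonnegX f₁)]
    congr 1
    have hne : p - 1 ≠ 0 := by intro h; linarith
    field_simp
  calc (∫ x, (starRingEnd ℂ) (M x) * vvX p f₁ x ∂μ).re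
      ≤ (∫ x, ‖M x‖ ^ p ∂μ) ^ (1/p) * (∫ x, ‖vvX p f₁ x‖ ^ (p/(p-1)) ∂μ) ^ (1/(p/(p-1))) :=
        le_trans step1 step2
    _ = np μ p M * (np μ p f₁) ^ (p-1) := by
        rw [e1, ← np_eqX hp0 hM, ← np_rpowX hp0 h1, e2]

lemma conj_mul_vvX (hp : 2 < p) (z : ℂ) :
    (starRingEnd ℂ) z * ((‖z‖ ^ (p-2) : ℝ) • z) = ((‖z‖ ^ p : ℝ) : ℂ) := by
  rw [mul_smul_comm, mul_comm ((starRingEnd ℂ) z) z, Complex.mul_conj, Complex.real_smul,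
    ← Complex.ofReal_mul]
  congr 1
  rw [Complex.normSq_eq_norm_sq,
    show p = (p-2) + 2 by ring, Real.rpow_add' (norm_nonneg z) (by intro h; linarith),
    Real.rpow_two]
  ring_nf

lemma pair_eqX (hp : 2 < p) {f₁ f₂ : Ω → ℂ} (h1 : MemLp f₁ (ENNReal.ofReal p) μ)
    (h2 : MemLp f₂ (ENNReal.ofReal p) μ) :
    pairL μ (f₂ - f₁) (gradE μ p f₁)
      = 2 * ((np μ p f₁) ^ ((2:ℝ)-p)
          * ((∫ x, (starRingEnd ℂ) (f₂ x) * vvX p f₁ x ∂μ).re - (np μ p f₁) ^ p)) := by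
  have hp0 : (0:ℝ) < p := by linarith
  have hp1 : (1:ℝ) < p := by linarith
  set A := np μ p f₁ with hA
  set c : ℝ := A ^ ((2:ℝ)-p) with hc
  have hgrad : ∀ x, gradE μ p f₁ x = c • vvX p f₁ x := by
    intro x
    rw [gradE, vvX, mul_smul, hc, hA]
  have hInt1 : Integrable (fun x => (starRingEnd ℂ) (f₂ x) * vvX p f₁ x) μ :=
    integrable_conj_mulX hp1 h2 (vv_memLpX hp h1)
  have hInt2 : Integrable (fun x => ((‖f₁ x‖ ^ p : ℝ) : ℂ)) μ :=
    (intg_norm_rpowX hp0 h1).ofReal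
  have hptw : ∀ x, (starRingEnd ℂ) ((f₂ - f₁) x) * gradE μ p f₁ x
      = c • ((starRingEnd ℂ) (f₂ x) * vvX p f₁ x - ((‖f₁ x‖ ^ p : ℝ) : ℂ)) := by
    intro x
    rw [hgrad x, Pi.sub_apply, map_sub, sub_mul, mul_smul_comm, mul_smul_comm, smul_sub]
    congr 2
    exact conj_mul_vvX hp (f₁ x)
  calc pairL μ (f₂ - f₁) (gradE μ p f₁)
      = 2 * (∫ x, c • ((starRingEnd ℂ) (f₂ x) * vvX p f₁ x - ((‖f₁ x‖ ^ p : ℝ) : ℂ)) ∂μ).re := by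
        rw [pairL]
        congr 2
        exact integral_congr_ae (Filter.Eventually.of_forall hptw)
    _ = 2 * (c • ((∫ x, (starRingEnd ℂ) (f₂ x) * vvX p f₁ x ∂μ)
          - ∫ x, ((‖f₁ x‖ ^ p : ℝ) : ℂ) ∂μ)).re := by
        rw [integral_smul, integral_sub hInt1 hInt2]
    _ = 2 * (c * ((∫ x, (starRingEnd ℂ) (f₂ x) * vvX p f₁ x ∂μ).re - ∫ x, ‖f₁ x‖ ^ p ∂μ)) := by
        have hY : (∫ x, ((‖f₁ x‖ ^ p : ℝ) : ℂ) ∂μ) = ((∫ x, ‖f₁ x‖ ^ p ∂μ : ℝ) : ℂ) := by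
          simpa using integral_ofReal (𝕜 := ℂ) (f := fun x => ‖f₁ x‖ ^ p) (μ := μ)
        rw [hY]
        simp [Complex.smul_re, Complex.sub_re, Complex.ofReal_re]
    _ = 2 * (A ^ ((2:ℝ)-p)
          * ((∫ x, (starRingEnd ℂ) (f₂ x) * vvX p f₁ x ∂μ).re - A ^ p)) := by
        rw [np_rpowX hp0 h1]

end Helpers

/-- for `2 < p < ∞`, the squared `L^p` norm satisfies
`E(f₂) ≥ E(f₁) + ⟨f₂-f₁, ∇E(f₁)⟩
  + (1/(4p))(2/3)^{p-1}(‖f₁‖_p + ‖f₂‖_p)^{2-p}‖f₂-f₁‖_p^p`. -/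
theorem stmt_13 {Ω : Type*} [MeasurableSpace Ω] (μ : Measure Ω) (p : ℝ) (hp : 2 < p) :
    ∀ f₁ f₂ : Ω → ℂ, MemLp f₁ (ENNReal.ofReal p) μ → MemLp f₂ (ENNReal.ofReal p) μ →
      np μ p f₁ ^ 2 + pairL μ (f₂ - f₁) (gradE μ p f₁) +
          (1 / (4 * p)) * (2 / 3 : ℝ) ^ (p - 1) *
            (np μ p f₁ + np μ p f₂) ^ (2 - p) * np μ p (f₂ - f₁) ^ p ≤
        np μ p f₂ ^ 2 := by
  intro f₁ f₂ h1 h2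
  have hp0 : (0:ℝ) < p := by linarith
  have hp1 : (1:ℝ) < p := by linarith
  have hP0 : ENNReal.ofReal p ≠ 0 := by simp [ENNReal.ofReal_eq_zero, not_le, hp0]
  set A := np μ p f₁ with hA
  set B := np μ p f₂ with hB
  set δ := np μ p (f₂ - f₁) with hδ
  have hA0 : 0 ≤ A := np_nonnegX f₁
  have hB0 : 0 ≤ B := np_nonnegX f₂
  have hδ0 : 0 ≤ δ := np_nonnegX _
  have hK1 : 1 / (4*p) * (2/3:ℝ) ^ (p-1) ≤ 1 := by
    have c1 : (2/3:ℝ) ^ (p-1) ≤ 1 :=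
      Real.rpow_le_one (by norm_num) (by norm_num) (by linarith)
    have c2 : 1 / (4*p) ≤ 1 := by
      rw [div_le_one (by linarith)]; linarith
    nlinarith [Real.rpow_nonneg (show (0:ℝ) ≤ 2/3 by norm_num) (p-1)]
  by_cases hAz : A = 0
  · -- f₁ vanishes a.e.
    have hf10 : f₁ =ᵐ[μ] 0 := by
      have h0 : eLpNorm f₁ (ENNReal.ofReal p) μ = 0 := by
        rcases (ENNReal.toReal_eq_zero_iff _).mp hAz with h | h
        · exact h
        · exact absurd h h1.eLpNorm_ne_top
      exact (eLpNorm_eq_zero_iff h1.aestronglyMeasurable hP0).mp h0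
    have hgrad0 : gradE μ p f₁ = fun _ => (0:ℂ) := by
      funext x
      rw [gradE, ← hA, hAz, Real.zero_rpow (by intro h; linarith : (2:ℝ) - p ≠ 0)]
      simp
    have hpair0 : pairL μ (f₂ - f₁) (gradE μ p f₁) = 0 := by
      rw [pairL, hgrad0]
      simp
    have hδB : δ = B := by
      rw [hδ, hB]
      apply np_congrX
      filter_upwards [hf10] with x hx
      simp [hx]
    rw [hpair0, hδB, hAz]
    by_cases hBz : B = 0
    · rw [hBz]
      rw [Real.zero_rpow hp0.ne']
      norm_num
    · have hBpos : 0 < B := lt_of_le_of_ne hB0 (Ne.symm hBz)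
      have e1 : (0 + B) ^ ((2:ℝ)-p) * B ^ p = B ^ 2 := by
        rw [zero_add, ← Real.rpow_add hBpos, show 2 - p + p = (2:ℝ) by ring, Real.rpow_two]
      have hBsq : (0:ℝ) ≤ B ^ 2 := sq_nonneg B
      nlinarith [Real.rpow_nonneg hB0 p, Real.rpow_nonneg (add_nonneg (le_refl (0:ℝ)) hB0) ((2:ℝ)-p)]
  · have hApos : 0 < A := lt_of_le_of_ne hA0 (Ne.symm hAz)
    rw [pair_eqX hp h1 h2, ← hA]
    set I := (∫ x, (starRingEnd ℂ) (f₂ x) * vvX p f₁ x ∂μ).re with hI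
    have eq1 : A ^ ((2:ℝ)-p) * A ^ p = A ^ 2 := by
      rw [← Real.rpow_add hApos, show 2 - p + p = (2:ℝ) by ring, Real.rpow_two]
    have eq2 : A ^ ((2:ℝ)-p) * A ^ (p-1) = A := by
      rw [← Real.rpow_add hApos, show 2 - p + (p-1) = (1:ℝ) by ring, Real.rpow_one]
    by_cases hBz : B = 0
    · -- f₂ vanishes a.e.
      have hf20 : f₂ =ᵐ[μ] 0 := by
        have h0 : eLpNorm f₂ (ENNReal.ofReal p) μ = 0 := by
          rcases (ENNReal.toReal_eq_zero_iff _).mp hBz with h | h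
          · exact h
          · exact absurd h h2.eLpNorm_ne_top
        exact (eLpNorm_eq_zero_iff h2.aestronglyMeasurable hP0).mp h0
      have hI0 : I = 0 := by
        rw [hI]
        have : (∫ x, (starRingEnd ℂ) (f₂ x) * vvX p f₁ x ∂μ) = 0 := by
          rw [integral_congr_ae (g := fun _ => (0:ℂ))]
          · simp
          · filter_upwards [hf20] with x hx
            simp [hx]
        rw [this]
        simp
      have hδA : δ = A := by
        rw [hδ, hA]
        have e : np μ p (f₂ - f₁) = np μ p (fun x => -f₁ x) := by
          apply np_congrX
          filter_upwards [hf20] with x hx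
          simp [hx]
        rw [e, show (fun x => -f₁ x) = -f₁ from rfl, np, eLpNorm_neg]
        rfl
      rw [hI0, hδA, hBz]
      have e1 : (A + 0) ^ ((2:ℝ)-p) * A ^ p = A ^ 2 := by
        rw [add_zero, ← Real.rpow_add hApos, show 2 - p + p = (2:ℝ) by ring, Real.rpow_two]
      nlinarith [sq_nonneg A, Real.rpow_nonneg hA0 p,
        Real.rpow_nonneg (add_nonneg hA0 (le_refl (0:ℝ))) ((2:ℝ)-p)]
    · have hBpos : 0 < B := lt_of_le_of_ne hB0 (Ne.symm hBz)
      -- main case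
      set G : Ω → ℂ := fun x => ((B/A : ℝ)) • f₁ x with hG
      have hGmem : MemLp G (ENNReal.ofReal p) μ := h1.const_smul (B/A : ℝ)
      have hnpG : np μ p G = B := by
        rw [hG, np_smulX, ← hA, abs_of_pos (div_pos hBpos hApos), div_mul_cancel₀ _ hApos.ne']
      set M : Ω → ℂ := fun x => f₂ x + G x with hM
      set N : Ω → ℂ := fun x => f₂ x - G x with hN
      have hMmem : MemLp M (ENNReal.ofReal p) μ := h2.add hGmem
      have hNmem : MemLp N (ENNReal.ofReal p) μ := h2.sub hGmem
      set s := np μ p N with hs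
      have hs0 : 0 ≤ s := np_nonnegX _
      have hsN : s ^ p = ∫ x, ‖N x‖ ^ p ∂μ := np_rpowX hp0 hNmem
      have hJM0 : (0:ℝ) ≤ ∫ x, ‖M x‖ ^ p ∂μ :=
        integral_nonneg fun x => Real.rpow_nonneg (norm_nonneg _) _
      have hClark : (∫ x, ‖M x‖ ^ p ∂μ) + s ^ p ≤ 2 ^ p * B ^ p := by
        have h := clarkson_intX hp h2 hGmem
        have e2 : ∫ x, ‖f₂ x‖ ^ p ∂μ = B ^ p := (np_rpowX hp0 h2).symm
        have eG : ∫ x, ‖G x‖ ^ p ∂μ = B ^ p := by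
          rw [← np_rpowX hp0 hGmem, hnpG]
        rw [e2, eG] at h
        have e2p : (2:ℝ) ^ (p-1) * (B ^ p + B ^ p) = 2 ^ p * B ^ p := by
          rw [show p = 1 + (p-1) by ring, Real.rpow_add (by norm_num : (0:ℝ) < 2),
            Real.rpow_one]
          ring_nf
        rw [e2p] at h
        rw [hsN]
        exact h
      have hstep := stepDX hp hBpos hJM0 (Real.rpow_nonneg hs0 p) hClark
      have hnpM : np μ p M = (∫ x, ‖M x‖ ^ p ∂μ) ^ (1/p) := np_eqX hp0 hMmem
      -- Hölder bound with splitting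
      have hsplit : (∫ x, (starRingEnd ℂ) (M x) * vvX p f₁ x ∂μ).re
          = I + (B/A) * A ^ p := by
        have hInt1 : Integrable (fun x => (starRingEnd ℂ) (f₂ x) * vvX p f₁ x) μ :=
          integrable_conj_mulX hp1 h2 (vv_memLpX hp h1)
        have hInt2 : Integrable (fun x => ((B/A : ℝ)) • ((‖f₁ x‖ ^ p : ℝ) : ℂ)) μ :=
          ((intg_norm_rpowX hp0 h1).ofReal).smul (B/A : ℝ)
        have hptw : ∀ x, (starRingEnd ℂ) (M x) * vvX p f₁ x
            = (starRingEnd ℂ) (f₂ x) * vvX p f₁ x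
              + ((B/A : ℝ)) • ((‖f₁ x‖ ^ p : ℝ) : ℂ) := by
          intro x
          rw [hM]
          simp only [map_add, add_mul]
          congr 1
          rw [hG]
          have hconj : (starRingEnd ℂ) (((B/A : ℝ)) • f₁ x)
              = ((B/A : ℝ)) • (starRingEnd ℂ) (f₁ x) := by
            simp [Complex.real_smul]
          rw [hconj, smul_mul_assoc]
          congr 1
          exact conj_mul_vvX hp (f₁ x)
        calc (∫ x, (starRingEnd ℂ) (M x) * vvX p f₁ x ∂μ).re
            = (∫ x, ((starRingEnd ℂ) (f₂ x) * vvX p f₁ x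
                + ((B/A : ℝ)) • ((‖f₁ x‖ ^ p : ℝ) : ℂ)) ∂μ).re := by
              congr 1
              exact integral_congr_ae (Filter.Eventually.of_forall hptw)
          _ = I + (B/A) * A ^ p := by
              rw [integral_add hInt1 hInt2, integral_smul]
              have hY : (∫ x, ((‖f₁ x‖ ^ p : ℝ) : ℂ) ∂μ) = ((∫ x, ‖f₁ x‖ ^ p ∂μ : ℝ) : ℂ) := by
                simpa using integral_ofReal (𝕜 := ℂ) (f := fun x => ‖f₁ x‖ ^ p) (μ := μ)
              rw [hY, ← np_rpowX hp0 h1, ← hA]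
              simp [Complex.add_re, Complex.smul_re, Complex.ofReal_re, hI]
      have hHold := holder_boundX hp h1 hMmem
      rw [hsplit, ← hA] at hHold
      -- combine : I ≤ A^{p-1} B - A^{p-1} (s^p / (p 2^{p-1} B^{p-1}))
      have hApm : (0:ℝ) ≤ A ^ (p-1) := Real.rpow_nonneg hA0 _
      have hBA : (B/A) * A ^ p = B * A ^ (p-1) := by
        rw [show p = (p-1) + 1 by ring, Real.rpow_add hApos, Real.rpow_one]
        field_simp
        ring
      have h6 : np μ p M * A ^ (p-1)
          ≤ (2 * B - s ^ p / (p * 2 ^ (p-1) * B ^ (p-1))) * A ^ (p-1) := by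
        apply mul_le_mul_of_nonneg_right _ hApm
        rw [hnpM]
        exact hstep
      have hIle : I ≤ A ^ (p-1) * B - A ^ (p-1) * (s ^ p / (p * 2 ^ (p-1) * B ^ (p-1))) := by
        have := hHold
        rw [hBA] at this
        nlinarith [h6]
      -- triangle inequalities
      have hW : np μ p (fun x => ((B/A - 1 : ℝ)) • f₁ x) = |B - A| := by
        rw [np_smulX, ← hA]
        rw [show B/A - 1 = (B - A)/A by field_simp, abs_div, abs_of_pos hApos,
          div_mul_cancel₀ _ hApos.ne']
      have hδ1 : δ ≤ s + |B - A| := by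
        have efun : (f₂ - f₁) = (fun x => N x + ((B/A - 1 : ℝ)) • f₁ x) := by
          funext x
          rw [hN, hG]
          simp only [Pi.sub_apply, Complex.real_smul]
          push_cast
          ring
        rw [hδ, efun]
        calc np μ p (fun x => N x + ((B/A - 1 : ℝ)) • f₁ x)
            ≤ np μ p N + np μ p (fun x => ((B/A - 1 : ℝ)) • f₁ x) :=
              np_add_leX hp1.le hNmem (h1.const_smul (B/A - 1 : ℝ))
          _ = s + |B - A| := by rw [hW, ← hs]
      have hδ2 : δ ≤ A / B * s + |B - A| := by
        have hW2 : np μ p (fun x => ((1 - A/B : ℝ)) • f₂ x) = |B - A| := by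
          rw [np_smulX, ← hB]
          rw [show 1 - A/B = (B - A)/B by field_simp, abs_div, abs_of_pos hBpos,
            div_mul_cancel₀ _ hBpos.ne']
        have hN2 : np μ p (fun x => ((A/B : ℝ)) • N x) = A/B * s := by
          rw [np_smulX, ← hs, abs_of_pos (div_pos hApos hBpos)]
        have efun : (f₂ - f₁) = (fun x => ((A/B : ℝ)) • N x + ((1 - A/B : ℝ)) • f₂ x) := by
          funext x
          rw [hN, hG]
          simp only [Pi.sub_apply, Complex.real_smul, smul_sub]
          push_cast
          have hAne : (A:ℂ) ≠ 0 := by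
            exact_mod_cast hApos.ne'
          have hBne : (B:ℂ) ≠ 0 := by
            exact_mod_cast hBpos.ne'
          field_simp
          ring
        rw [hδ, efun]
        calc np μ p (fun x => ((A/B : ℝ)) • N x + ((1 - A/B : ℝ)) • f₂ x)
            ≤ np μ p (fun x => ((A/B : ℝ)) • N x) + np μ p (fun x => ((1 - A/B : ℝ)) • f₂ x) :=
              np_add_leX hp1.le (hNmem.const_smul (A/B : ℝ)) (h2.const_smul (1 - A/B : ℝ))
          _ = A/B * s + |B - A| := by rw [hW2, hN2]
      have hδ3 : δ ≤ A + B := by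
        have efun : (f₂ - f₁) = (fun x => f₂ x + (-f₁) x) := by
          funext x; simp [sub_eq_add_neg]
        rw [hδ, efun]
        have hneg : np μ p (-f₁) = np μ p f₁ := by
          rw [np, np, eLpNorm_neg]
        calc np μ p (fun x => f₂ x + (-f₁) x) ≤ np μ p f₂ + np μ p (-f₁) :=
              np_add_leX hp1.le h2 h1.neg
          _ = A + B := by
            rw [hneg, ← hA, ← hB]; ring
      have hkey := key_scalarX hp hApos hBpos hδ0 hs0 hδ1 hδ2 hδ3
      -- final assembly
      have expand : 2 * (A ^ ((2:ℝ)-p) * (I - A ^ p)) = 2 * (A ^ ((2:ℝ)-p) * I) - 2 * A ^ 2 := by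
        rw [mul_sub, ← eq1]; ring
      have hI2 : 2 * (A ^ ((2:ℝ)-p) * I)
          ≤ 2 * A * B - 2 * A / (p * 2 ^ (p-1) * B ^ (p-1)) * s ^ p := by
        have hc : (0:ℝ) ≤ 2 * A ^ ((2:ℝ)-p) := by positivity
        have h7 := mul_le_mul_of_nonneg_left hIle hc
        calc 2 * (A ^ ((2:ℝ)-p) * I) = 2 * A ^ ((2:ℝ)-p) * I := by ring
          _ ≤ 2 * A ^ ((2:ℝ)-p)
              * (A ^ (p-1) * B - A ^ (p-1) * (s ^ p / (p * 2 ^ (p-1) * B ^ (p-1)))) := h7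
          _ = 2 * (A ^ ((2:ℝ)-p) * A ^ (p-1)) * B
              - 2 * (A ^ ((2:ℝ)-p) * A ^ (p-1)) * (s ^ p / (p * 2 ^ (p-1) * B ^ (p-1))) := by
              ring
          _ = 2 * A * B - 2 * A / (p * 2 ^ (p-1) * B ^ (p-1)) * s ^ p := by
              rw [eq2]; ring
      have hring : (B - A) ^ 2 = B ^ 2 - 2 * A * B + A ^ 2 := by ring
      linarith [hI2, hkey, expand]
end
end
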